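/- arXiv:2310.05466 — 3 statements merged into one kernel-verified Lean document; each statement's English description precedes it below -/
import Mathlib

section
/- Let f : ℝ_{>0}^n → ℝ, f(x) = ∑_{μ ∈ σ(f)} c_μ x^μ be a signomial such that σ_+(f) has a pair of strict enclosing hyperplanes (H_{v,a}, H_{v,b}) with a ≥ b. If there exist negative exponent vectors β₁, β₂ ∈ σ_-(f) with β₁ ∈ H^+_{v,a}, β₂ ∈ H^-_{v,b}, and Conv({β₁, β₂}) ∩ Conv(σ_+(f)) = ∅, then f^{-1}(ℝ_{<0}) is non-empty and connected. -/
open Finset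

/-- The signomial `x ↦ ∑_{μ ∈ S} c μ * x^μ` (with real exponents, via `Real.rpow`). -/
noncomputable def sig {n : ℕ} (S : Finset (Fin n → ℝ)) (c : (Fin n → ℝ) → ℝ)
    (x : Fin n → ℝ) : ℝ :=
  ∑ μ ∈ S, c μ * ∏ i, x i ^ μ i

open Classical in
/-- The restriction `f|_F` of the signomial to a subset `F ⊆ ℝⁿ` of exponent vectors. -/
noncomputable def sigOn {n : ℕ} (S : Finset (Fin n → ℝ)) (c : (Fin n → ℝ) → ℝ)
    (F : Set (Fin n → ℝ)) (x : Fin n → ℝ) : ℝ :=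
  ∑ μ ∈ S, if μ ∈ F then c μ * ∏ i, x i ^ μ i else 0

/-- `f⁻¹(ℝ_{<0})`: the points of the positive orthant where the signomial is negative. -/
def negSet {n : ℕ} (S : Finset (Fin n → ℝ)) (c : (Fin n → ℝ) → ℝ) : Set (Fin n → ℝ) :=
  {x | (∀ i, 0 < x i) ∧ sig S c x < 0}

/-- `(f|_F)⁻¹(ℝ_{<0})`. -/
def negSetOn {n : ℕ} (S : Finset (Fin n → ℝ)) (c : (Fin n → ℝ) → ℝ)
    (F : Set (Fin n → ℝ)) : Set (Fin n → ℝ) :=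
  {x | (∀ i, 0 < x i) ∧ sigOn S c F x < 0}

/-- `σ₊(f)`: the positive exponent vectors. -/
def sigPosSet {n : ℕ} (S : Finset (Fin n → ℝ)) (c : (Fin n → ℝ) → ℝ) : Set (Fin n → ℝ) :=
  {μ | μ ∈ S ∧ 0 < c μ}

/-- `σ₋(f)`: the negative exponent vectors. -/
def sigNegSet {n : ℕ} (S : Finset (Fin n → ℝ)) (c : (Fin n → ℝ) → ℝ) : Set (Fin n → ℝ) :=
  {μ | μ ∈ S ∧ c μ < 0}

/-- The hyperplane `H_{v,a}`. -/
def Hyp {n : ℕ} (v : Fin n → ℝ) (a : ℝ) : Set (Fin n → ℝ) :=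
  {μ | ∑ i, v i * μ i = a}

/-- The closed half-space `H⁺_{v,a}`. -/
def Hplus {n : ℕ} (v : Fin n → ℝ) (a : ℝ) : Set (Fin n → ℝ) :=
  {μ | a ≤ ∑ i, v i * μ i}

/-- The closed half-space `H⁻_{v,a}`. -/
def Hminus {n : ℕ} (v : Fin n → ℝ) (a : ℝ) : Set (Fin n → ℝ) :=
  {μ | ∑ i, v i * μ i ≤ a}

/-- The open half-space `H^{+,∘}_{v,a}`. -/
def HplusO {n : ℕ} (v : Fin n → ℝ) (a : ℝ) : Set (Fin n → ℝ) :=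
  {μ | a < ∑ i, v i * μ i}

/-- The open half-space `H^{-,∘}_{v,a}`. -/
def HminusO {n : ℕ} (v : Fin n → ℝ) (a : ℝ) : Set (Fin n → ℝ) :=
  {μ | ∑ i, v i * μ i < a}

/-- `U` is a connected component of `X` (a maximal nonempty preconnected subset of `X`). -/
def IsConnComp {n : ℕ} (X U : Set (Fin n → ℝ)) : Prop :=
  U.Nonempty ∧ U ⊆ X ∧ IsPreconnected U ∧
    ∀ W, U ⊆ W → W ⊆ X → IsPreconnected W → W = U

/-- The number (cardinality) of connected components of `X`. -/
noncomputable def compCard {n : ℕ} (X : Set (Fin n → ℝ)) : Cardinal :=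
  Cardinal.mk {U : Set (Fin n → ℝ) // IsConnComp X U}

/-- The face `N(f)_v` of the Newton polytope of a signomial with support `S`,
with outer normal vector `v`. -/
def faceOf {n : ℕ} (S : Finset (Fin n → ℝ)) (v : Fin n → ℝ) : Set (Fin n → ℝ) :=
  {ω ∈ convexHull ℝ (↑S : Set (Fin n → ℝ)) |
    ∀ μ ∈ convexHull ℝ (↑S : Set (Fin n → ℝ)), ∑ i, v i * μ i ≤ ∑ i, v i * ω i}


section AuxiliaryForStmt9

open Real Filter

/-- Auxiliary: dot product `∑ i, μ i * y i`. -/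
def sgDot {n : ℕ} (μ y : Fin n → ℝ) : ℝ := ∑ i, μ i * y i

/-- Auxiliary: the signomial in logarithmic coordinates. -/
noncomputable def sgF {n : ℕ} (S : Finset (Fin n → ℝ)) (c : (Fin n → ℝ) → ℝ)
    (y : Fin n → ℝ) : ℝ := ∑ μ ∈ S, c μ * Real.exp (sgDot μ y)

/-- Auxiliary: coordinatewise exponential. -/
noncomputable def sgExp {n : ℕ} (y : Fin n → ℝ) : Fin n → ℝ := fun i => Real.exp (y i)

lemma sgDot_add {n : ℕ} (μ y z : Fin n → ℝ) : sgDot μ (y + z) = sgDot μ y + sgDot μ z := by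
  simp [sgDot, mul_add, Finset.sum_add_distrib]

lemma sgDot_smul {n : ℕ} (μ : Fin n → ℝ) (t : ℝ) (y : Fin n → ℝ) :
    sgDot μ (t • y) = t * sgDot μ y := by
  simp only [sgDot, Pi.smul_apply, smul_eq_mul, Finset.mul_sum]
  exact Finset.sum_congr rfl fun i _ => by ring

lemma sgDot_sub {n : ℕ} (μ y z : Fin n → ℝ) : sgDot μ (y - z) = sgDot μ y - sgDot μ z := by
  simp [sgDot, mul_sub, Finset.sum_sub_distrib]

lemma sgDot_comm {n : ℕ} (v μ : Fin n → ℝ) : (∑ i, v i * μ i) = sgDot μ v :=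
  Finset.sum_congr rfl fun i _ => mul_comm _ _

lemma sig_sgExp {n : ℕ} (S : Finset (Fin n → ℝ)) (c : (Fin n → ℝ) → ℝ) (y : Fin n → ℝ) :
    sig S c (sgExp y) = sgF S c y := by
  unfold sig sgF
  refine Finset.sum_congr rfl fun μ _ => ?_
  congr 1
  have h : ∀ i : Fin n, sgExp y i ^ μ i = Real.exp (μ i * y i) := by
    intro i
    rw [sgExp, Real.rpow_def_of_pos (Real.exp_pos _), Real.log_exp, mul_comm]
  rw [Finset.prod_congr rfl fun i _ => h i, ← Real.exp_sum]
  rfl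

private lemma rolle_step {ι : Type*} (I : Finset ι) (C E : ι → ℝ) (e : ℝ) {z₁ z₂ : ℝ}
    (h12 : z₁ < z₂)
    (h1 : ∑ i ∈ I, C i * Real.exp (E i * z₁) = 0)
    (h2 : ∑ i ∈ I, C i * Real.exp (E i * z₂) = 0) :
    ∃ z ∈ Set.Ioo z₁ z₂, ∑ i ∈ I, C i * ((E i - e) * Real.exp ((E i - e) * z)) = 0 := by
  have key : ∀ t : ℝ, ∑ i ∈ I, C i * Real.exp ((E i - e) * t)
      = Real.exp (-e * t) * ∑ i ∈ I, C i * Real.exp (E i * t) := by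
    intro t
    rw [Finset.mul_sum]
    refine Finset.sum_congr rfl fun i _ => ?_
    rw [mul_left_comm, ← Real.exp_add]
    congr 2
    ring
  have hcont : ContinuousOn (fun t => ∑ i ∈ I, C i * Real.exp ((E i - e) * t))
      (Set.Icc z₁ z₂) := by
    apply Continuous.continuousOn
    exact continuous_finset_sum _ fun i _ =>
      continuous_const.mul (Real.continuous_exp.comp (continuous_const.mul continuous_id))
  have hI : (fun t => ∑ i ∈ I, C i * Real.exp ((E i - e) * t)) z₁
      = (fun t => ∑ i ∈ I, C i * Real.exp ((E i - e) * t)) z₂ := by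
    simp only [key, h1, h2, mul_zero]
  have hder : ∀ x ∈ Set.Ioo z₁ z₂,
      HasDerivAt (fun t => ∑ i ∈ I, C i * Real.exp ((E i - e) * t))
        (∑ i ∈ I, C i * ((E i - e) * Real.exp ((E i - e) * x))) x := by
    intro x _
    refine HasDerivAt.fun_sum fun i _ => ?_
    have h : HasDerivAt (fun t : ℝ => (E i - e) * t) (E i - e) x := by
      simpa using (hasDerivAt_id x).const_mul (E i - e)
    simpa [mul_comm, mul_left_comm] using (h.exp.const_mul (C i))
  exact exists_hasDerivAt_eq_zero h12 hcont hI hder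

private lemma rolle3 (T : Finset ℝ) (C : ℝ → ℝ) (cc dd : ℝ)
    (hsign : ∀ α ∈ T, (α < cc → C α ≤ 0) ∧ (cc < α → α < dd → 0 ≤ C α) ∧
      (dd < α → C α ≤ 0) ∧ α ≠ cc ∧ α ≠ dd)
    (α₀ : ℝ) (hα₀T : α₀ ∈ T) (hα₀1 : cc < α₀) (hα₀2 : α₀ < dd) (hα₀C : 0 < C α₀)
    {z₁ z₂ z₃ : ℝ} (h12 : z₁ < z₂) (h23 : z₂ < z₃)
    (g1 : ∑ α ∈ T, C α * Real.exp (α * z₁) = 0)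
    (g2 : ∑ α ∈ T, C α * Real.exp (α * z₂) = 0)
    (g3 : ∑ α ∈ T, C α * Real.exp (α * z₃) = 0) : False := by
  obtain ⟨w₁, hw₁, e1⟩ := rolle_step T C id cc h12 g1 g2
  obtain ⟨w₂, hw₂, e2⟩ := rolle_step T C id cc h23 g2 g3
  have hww : w₁ < w₂ := lt_trans hw₁.2 hw₂.1
  -- second step: coefficients C' α = C α * (α - cc), exponents E' α = α - cc, shift e' = dd - cc
  have e1' : ∑ α ∈ T, (C α * (α - cc)) * Real.exp ((α - cc) * w₁) = 0 := by
    rw [← e1]; exact Finset.sum_congr rfl fun α _ => by simp only [id_eq]; rw [mul_assoc]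
  have e2' : ∑ α ∈ T, (C α * (α - cc)) * Real.exp ((α - cc) * w₂) = 0 := by
    rw [← e2]; exact Finset.sum_congr rfl fun α _ => by simp only [id_eq]; rw [mul_assoc]
  obtain ⟨z, _, e3⟩ := rolle_step T (fun α => C α * (α - cc)) (fun α => α - cc)
    (dd - cc) hww e1' e2'
  have e3' : ∑ α ∈ T, (C α * (α - cc)) * ((α - dd) * Real.exp ((α - dd) * z)) = 0 := by
    rw [← e3]
    refine Finset.sum_congr rfl fun α _ => ?_
    have h : α - cc - (dd - cc) = α - dd := by ring
    rw [h]
  have hneg : ∑ α ∈ T, (C α * (α - cc)) * ((α - dd) * Real.exp ((α - dd) * z)) < 0 := by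
    have hle : ∀ α ∈ T, (C α * (α - cc)) * ((α - dd) * Real.exp ((α - dd) * z)) ≤ 0 := by
      intro α hα
      obtain ⟨hs1, hs2, hs3, hne1, hne2⟩ := hsign α hα
      have hexp : 0 < Real.exp ((α - dd) * z) := Real.exp_pos _
      rcases lt_trichotomy α cc with h | h | h
      · have hC := hs1 h
        have hA : 0 ≤ C α * (α - cc) := by nlinarith
        have hB : (α - dd) * Real.exp ((α - dd) * z) ≤ 0 :=
          (mul_neg_of_neg_of_pos (by linarith [hα₀1.trans hα₀2]) hexp).le
        exact mul_nonpos_iff.mpr (Or.inl ⟨hA, hB⟩)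
      · exact absurd h hne1
      · rcases lt_trichotomy α dd with h' | h' | h'
        · have hC := hs2 h h'
          have hA : 0 ≤ C α * (α - cc) := mul_nonneg hC (by linarith)
          have hB : (α - dd) * Real.exp ((α - dd) * z) ≤ 0 :=
            (mul_neg_of_neg_of_pos (by linarith) hexp).le
          exact mul_nonpos_iff.mpr (Or.inl ⟨hA, hB⟩)
        · exact absurd h' hne2
        · have hC := hs3 h'
          have hA : C α * (α - cc) ≤ 0 := mul_nonpos_iff.mpr (Or.inr ⟨hC, by linarith⟩)
          have hB : 0 ≤ (α - dd) * Real.exp ((α - dd) * z) :=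
            mul_nonneg (by linarith) hexp.le
          exact mul_nonpos_iff.mpr (Or.inr ⟨hA, hB⟩)
    have hlt : ∃ α ∈ T, (C α * (α - cc)) * ((α - dd) * Real.exp ((α - dd) * z)) < 0 := by
      refine ⟨α₀, hα₀T, ?_⟩
      have hexp : 0 < Real.exp ((α₀ - dd) * z) := Real.exp_pos _
      exact mul_neg_of_pos_of_neg (mul_pos hα₀C (by linarith))
        (mul_neg_of_neg_of_pos (by linarith) hexp)
    calc ∑ α ∈ T, (C α * (α - cc)) * ((α - dd) * Real.exp ((α - dd) * z))
        < ∑ α ∈ T, (0:ℝ) := Finset.sum_lt_sum hle hlt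
      _ = 0 := by simp
  exact absurd e3' (ne_of_lt hneg)

private lemma pickBelow (T : Finset ℝ) (x lo : ℝ) (h : lo < x) :
    ∃ y, lo < y ∧ y < x ∧ ∀ α ∈ T, α < x → α < y := by
  classical
  by_cases hne : (T.filter (fun β => β < x)).Nonempty
  · obtain ⟨M, hMmem⟩ : ∃ M, (T.filter (fun β => β < x)).max' hne = M := ⟨_, rfl⟩
    have hMx : M < x := by
      have := (Finset.mem_filter.mp ((T.filter (fun β => β < x)).max'_mem hne)).2
      rwa [hMmem] at this
    have hx : max lo M < x := max_lt h hMx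
    refine ⟨(max lo M + x) / 2, ?_, by linarith, ?_⟩
    · linarith [le_max_left lo M]
    · intro α hα hαx
      have h1 : α ≤ M := by
        have := Finset.le_max' (T.filter (fun β => β < x)) α
          (Finset.mem_filter.mpr ⟨hα, hαx⟩)
        rwa [hMmem] at this
      linarith [le_max_right lo M]
  · refine ⟨(lo + x) / 2, by linarith, by linarith, ?_⟩
    intro α hα hαx
    exact absurd ⟨α, Finset.mem_filter.mpr ⟨hα, hαx⟩⟩ hne

private lemma pickAbove (T : Finset ℝ) (x hi : ℝ) (h : x < hi) :
    ∃ y, x < y ∧ y < hi ∧ ∀ α ∈ T, x < α → y < α := by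
  classical
  by_cases hne : (T.filter (fun β => x < β)).Nonempty
  · obtain ⟨M, hMmem⟩ : ∃ M, (T.filter (fun β => x < β)).min' hne = M := ⟨_, rfl⟩
    have hMx : x < M := by
      have := (Finset.mem_filter.mp ((T.filter (fun β => x < β)).min'_mem hne)).2
      rwa [hMmem] at this
    have hx : x < min hi M := lt_min h hMx
    refine ⟨(x + min hi M) / 2, by linarith, ?_, ?_⟩
    · linarith [min_le_left hi M]
    · intro α hα hαx
      have h1 : M ≤ α := by
        have := Finset.min'_le (T.filter (fun β => x < β)) α
          (Finset.mem_filter.mpr ⟨hα, hαx⟩)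
        rwa [hMmem] at this
      linarith [min_le_right hi M]
  · refine ⟨(x + hi) / 2, by linarith, by linarith, ?_⟩
    intro α hα hαx
    exact absurd ⟨α, Finset.mem_filter.mpr ⟨hα, hαx⟩⟩ hne

private lemma oneSide {ι : Type*} (S' : Finset ι) (K A : ι → ℝ) (a b : ℝ) (hba : b ≤ a)
    (hK0 : ∀ i ∈ S', K i ≠ 0)
    (hKpos : ∀ i ∈ S', 0 < K i → b ≤ A i ∧ A i ≤ a)
    (hKneg : ∀ i ∈ S', K i < 0 → A i ≤ b ∨ a ≤ A i)
    (i₀ : ι) (hi₀ : i₀ ∈ S') (hKi₀ : K i₀ < 0) (hAi₀ : a < A i₀)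
    (hg0 : ∑ i ∈ S', K i < 0) :
    (∀ t, 0 ≤ t → ∑ i ∈ S', K i * Real.exp (A i * t) < 0) ∨
    (∀ t, t ≤ 0 → ∑ i ∈ S', K i * Real.exp (A i * t) < 0) := by
  classical
  by_contra hcon
  push_neg at hcon
  obtain ⟨⟨tp, htp0, htp⟩, ⟨tm, htm0, htm⟩⟩ := hcon
  have hgzero : (∑ i ∈ S', K i * Real.exp (A i * 0)) < 0 := by
    simpa using hg0
  have htppos : 0 < tp := by
    rcases htp0.eq_or_lt with h | h
    · exfalso; rw [← h] at htp; linarith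
    · exact h
  have htmneg : tm < 0 := by
    rcases htm0.lt_or_eq with h | h
    · exact h
    · exfalso; rw [h] at htm; linarith
  -- group by exponent value
  set T : Finset ℝ := S'.image A with hTdef
  set C : ℝ → ℝ := fun α => ∑ i ∈ S'.filter (fun j => A j = α), K i with hCdef
  have hrep : ∀ t, ∑ i ∈ S', K i * Real.exp (A i * t) = ∑ α ∈ T, C α * Real.exp (α * t) := by
    intro t
    rw [← Finset.sum_fiberwise_of_maps_to (fun i hi => Finset.mem_image_of_mem A hi)
        (fun i => K i * Real.exp (A i * t))]
    refine Finset.sum_congr rfl fun α hα => ?_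
    rw [hCdef, Finset.sum_mul]
    exact Finset.sum_congr rfl fun i hi => by rw [(Finset.mem_filter.mp hi).2]
  -- sign facts
  have hCb : ∀ α ∈ T, α < b → C α ≤ 0 := by
    intro α hα hαb
    refine Finset.sum_nonpos fun i hi => ?_
    obtain ⟨hiS, hiA⟩ := Finset.mem_filter.mp hi
    by_contra hpos
    push_neg at hpos
    have := (hKpos i hiS hpos).1
    rw [hiA] at this; linarith
  have hCmid : ∀ α ∈ T, b < α → α < a → 0 ≤ C α := by
    intro α hα hαb hαa
    refine Finset.sum_nonneg fun i hi => ?_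
    obtain ⟨hiS, hiA⟩ := Finset.mem_filter.mp hi
    by_contra hneg'
    push_neg at hneg'
    rcases hKneg i hiS hneg' with h | h <;> rw [hiA] at h <;> linarith
  have hCa' : ∀ α ∈ T, a < α → C α ≤ 0 := by
    intro α hα hαa
    refine Finset.sum_nonpos fun i hi => ?_
    obtain ⟨hiS, hiA⟩ := Finset.mem_filter.mp hi
    by_contra hpos
    push_neg at hpos
    have := (hKpos i hiS hpos).2
    rw [hiA] at this; linarith
  have hTne : A i₀ ∈ T := Finset.mem_image_of_mem A hi₀
  obtain ⟨MM, hMMdef⟩ : ∃ M, T.max' ⟨_, hTne⟩ = M := ⟨_, rfl⟩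
  have hMT : MM ∈ T := by rw [← hMMdef]; exact T.max'_mem _
  have haMM : a < MM := lt_of_lt_of_le hAi₀ (by rw [← hMMdef]; exact T.le_max' _ hTne)
  have hCMM : C MM < 0 := by
    obtain ⟨j, hjS, hjA⟩ := Finset.mem_image.mp hMT
    refine Finset.sum_neg (fun i hi => ?_) ⟨j, Finset.mem_filter.mpr ⟨hjS, hjA⟩⟩
    obtain ⟨hiS, hiA⟩ := Finset.mem_filter.mp hi
    rcases (hK0 i hiS).lt_or_gt with h | h
    · exact h
    · exfalso; have := (hKpos i hiS h).2; rw [hiA] at this; linarith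
  have hMMmax : ∀ α ∈ T, α ≠ MM → α < MM := fun α hα hne =>
    lt_of_le_of_ne (by rw [← hMMdef]; exact T.le_max' α hα) hne
  -- choose the slab walls cc < dd
  have key : ∃ cc dd, cc < dd ∧ dd < MM ∧ ∀ α ∈ T,
      (α < cc → C α ≤ 0) ∧ (cc < α → α < dd → 0 ≤ C α) ∧
      (dd < α → C α ≤ 0) ∧ α ≠ cc ∧ α ≠ dd := by
    rcases le_or_gt 0 (C b) with hCbpos | hCbneg
    · rcases le_or_gt 0 (C a) with hCapos | hCaneg
      · -- Case A
        obtain ⟨cc, hcc_lo, hcc_b, hcc_all⟩ := pickBelow T b (b - 1) (by linarith)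
        obtain ⟨dd, hdd_a, hdd_hi, hdd_all⟩ := pickAbove T a (a + 1) (by linarith)
        refine ⟨cc, dd, by linarith, hdd_all MM hMT haMM, fun α hα => ?_⟩
        refine ⟨fun h => hCb α hα (by linarith), fun h1 h2 => ?_, fun h => hCa' α hα ?_, ?_, ?_⟩
        · rcases lt_trichotomy α b with hb' | hb' | hb'
          · exact absurd (hcc_all α hα hb') (by linarith)
          · rw [hb']; exact hCbpos
          · rcases lt_trichotomy α a with ha' | ha' | ha'
            · exact hCmid α hα hb' ha'
            · rw [ha']; exact hCapos
            · exact absurd (hdd_all α hα ha') (by linarith)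
        · linarith
        · intro h; have := hcc_all α hα (h ▸ hcc_b); exact absurd (h ▸ this) (lt_irrefl cc)
        · intro h; have := hdd_all α hα (h ▸ hdd_a); exact absurd (h ▸ this) (lt_irrefl dd)
      · -- Case B
        have hblta : b < a := by
          rcases hba.eq_or_lt with h | h
          · exfalso; rw [h] at hCbpos; linarith
          · exact h
        obtain ⟨cc, hcc_lo, hcc_b, hcc_all⟩ := pickBelow T b (b - 1) (by linarith)
        obtain ⟨dd, hdd_b, hdd_a, hdd_all⟩ := pickBelow T a b hblta
        refine ⟨cc, dd, by linarith, by linarith, fun α hα => ?_⟩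
        refine ⟨fun h => hCb α hα (by linarith), fun h1 h2 => ?_, fun h => ?_, ?_, ?_⟩
        · rcases lt_trichotomy α b with hb' | hb' | hb'
          · exact absurd (hcc_all α hα hb') (by linarith)
          · rw [hb']; exact hCbpos
          · exact hCmid α hα hb' (by linarith)
        · rcases lt_trichotomy α a with ha' | ha' | ha'
          · exact absurd (hdd_all α hα ha') (by linarith)
          · rw [ha']; exact hCaneg.le
          · exact hCa' α hα ha'
        · intro h; have := hcc_all α hα (h ▸ hcc_b); exact absurd (h ▸ this) (lt_irrefl cc)
        · intro h
          have ha' : α < a := h ▸ hdd_a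
          have := hdd_all α hα ha'
          exact absurd (h ▸ this) (lt_irrefl dd)
    · rcases le_or_gt 0 (C a) with hCapos | hCaneg
      · -- Case C
        have hblta : b < a := by
          rcases hba.eq_or_lt with h | h
          · exfalso; rw [h] at hCbneg; linarith
          · exact h
        obtain ⟨cc, hcc_b, hcc_a, hcc_all⟩ := pickAbove T b a hblta
        obtain ⟨dd, hdd_a, hdd_hi, hdd_all⟩ := pickAbove T a (a + 1) (by linarith)
        refine ⟨cc, dd, by linarith, hdd_all MM hMT haMM, fun α hα => ?_⟩
        refine ⟨fun h => ?_, fun h1 h2 => ?_, fun h => hCa' α hα (by linarith), ?_, ?_⟩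
        · rcases lt_trichotomy α b with hb' | hb' | hb'
          · exact hCb α hα hb'
          · rw [hb']; exact hCbneg.le
          · exact absurd (hcc_all α hα hb') (by linarith)
        · rcases lt_trichotomy α a with ha' | ha' | ha'
          · exact hCmid α hα (by linarith) ha'
          · rw [ha']; exact hCapos
          · exact absurd (hdd_all α hα ha') (by linarith)
        · intro h
          have hb' : b < α := h ▸ hcc_b
          have := hcc_all α hα hb'
          exact absurd (h ▸ this) (lt_irrefl cc)
        · intro h; have := hdd_all α hα (h ▸ hdd_a); exact absurd (h ▸ this) (lt_irrefl dd)
      · -- Case D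
        rcases hba.eq_or_lt with hbeq | hblta
        · -- easy: all coefficients nonpositive, contradiction with 0 ≤ g tp
          exfalso
          have hallC : ∀ α ∈ T, C α ≤ 0 := by
            intro α hα
            rcases lt_trichotomy α a with h | h | h
            · exact hCb α hα (by rw [hbeq]; exact h)
            · rw [h]; exact hCaneg.le
            · exact hCa' α hα h
          have : (∑ α ∈ T, C α * Real.exp (α * tp)) < 0 := by
            have hle : ∀ α ∈ T, C α * Real.exp (α * tp) ≤ (0:ℝ) := fun α hα =>
              mul_nonpos_iff.mpr (Or.inr ⟨hallC α hα, (Real.exp_pos _).le⟩)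
            calc ∑ α ∈ T, C α * Real.exp (α * tp) < ∑ α ∈ T, (0:ℝ) :=
                  Finset.sum_lt_sum hle ⟨MM, hMT,
                    mul_neg_of_neg_of_pos hCMM (Real.exp_pos _)⟩
              _ = 0 := by simp
          rw [hrep tp] at htp; linarith
        · obtain ⟨cc, hcc_b, hcc_a, hcc_all⟩ := pickAbove T b a hblta
          obtain ⟨dd, hdd_cc, hdd_a, hdd_all⟩ := pickBelow T a cc hcc_a
          refine ⟨cc, dd, hdd_cc, by linarith, fun α hα => ?_⟩
          refine ⟨fun h => ?_, fun h1 h2 => hCmid α hα (by linarith) (by linarith), fun h => ?_, ?_, ?_⟩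
          · rcases lt_trichotomy α b with hb' | hb' | hb'
            · exact hCb α hα hb'
            · rw [hb']; exact hCbneg.le
            · exact absurd (hcc_all α hα hb') (by linarith)
          · rcases lt_trichotomy α a with ha' | ha' | ha'
            · exact absurd (hdd_all α hα ha') (by linarith)
            · rw [ha']; exact hCaneg.le
            · exact hCa' α hα ha'
          · intro h
            have hb' : b < α := h ▸ hcc_b
            have := hcc_all α hα hb'
            exact absurd (h ▸ this) (lt_irrefl cc)
          · intro h
            have ha' : α < a := h ▸ hdd_a
            have := hdd_all α hα ha'
            exact absurd (h ▸ this) (lt_irrefl dd)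
  obtain ⟨cc, dd, hccdd, hddMM, hspec⟩ := key
  -- perturbation exponent
  obtain ⟨cstar, hcsIoo, hcsT⟩ :=
    (Set.infinite_coe_iff.mp (Set.Ioo.infinite hccdd)).exists_notMem_finset T
  obtain ⟨hcs1, hcs2⟩ := hcsIoo
  set ε : ℝ := -(∑ i ∈ S', K i) / 2 with hεdef
  have hε : 0 < ε := by rw [hεdef]; linarith
  set C' : ℝ → ℝ := Function.update C cstar ε with hC'def
  set T' : Finset ℝ := insert cstar T with hT'def
  set G : ℝ → ℝ := fun t => ∑ α ∈ T', C' α * Real.exp (α * t) with hGdef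
  have hGg : ∀ t, G t = ε * Real.exp (cstar * t) + ∑ α ∈ T, C α * Real.exp (α * t) := by
    intro t
    rw [hGdef]
    simp only []
    rw [hT'def, Finset.sum_insert hcsT]
    congr 1
    · rw [hC'def, Function.update_self]
    · exact Finset.sum_congr rfl fun α hα => by
        rw [hC'def, Function.update_of_ne (by rintro rfl; exact hcsT hα)]
  have hGcont : Continuous G := by
    rw [hGdef]
    exact continuous_finset_sum _ fun α _ =>
      continuous_const.mul (Real.continuous_exp.comp (continuous_const.mul continuous_id))
  have hGtm : 0 < G tm := by
    rw [hGg]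
    have h1 : 0 < ε * Real.exp (cstar * tm) := mul_pos hε (Real.exp_pos _)
    have h2 : 0 ≤ ∑ α ∈ T, C α * Real.exp (α * tm) := by rw [← hrep]; exact htm
    linarith
  have hGtp : 0 < G tp := by
    rw [hGg]
    have h1 : 0 < ε * Real.exp (cstar * tp) := mul_pos hε (Real.exp_pos _)
    have h2 : 0 ≤ ∑ α ∈ T, C α * Real.exp (α * tp) := by rw [← hrep]; exact htp
    linarith
  have hG0 : G 0 < 0 := by
    rw [hGg]
    have h2 : ∑ α ∈ T, C α * Real.exp (α * 0) = ∑ i ∈ S', K i := by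
      rw [← hrep]; simp
    rw [h2]
    simp only [mul_zero, Real.exp_zero, mul_one]
    rw [hεdef]; linarith
  -- tail at +∞
  have hcsMM : cstar < MM := by linarith
  have hC'MM : C' MM = C MM := by
    rw [hC'def]; exact Function.update_of_ne (ne_of_gt hcsMM) _ _
  have hfac : ∀ t, G t = Real.exp (MM * t) * ∑ α ∈ T', C' α * Real.exp ((α - MM) * t) := by
    intro t
    rw [hGdef]
    simp only []
    rw [Finset.mul_sum]
    refine Finset.sum_congr rfl fun α _ => ?_
    rw [mul_left_comm, ← Real.exp_add]
    congr 2
    ring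
  have htendsto : Tendsto (fun t => ∑ α ∈ T', C' α * Real.exp ((α - MM) * t)) atTop
      (nhds (C MM)) := by
    have hterm : ∀ α ∈ T', Tendsto (fun t => C' α * Real.exp ((α - MM) * t)) atTop
        (nhds (if α = MM then C MM else 0)) := by
      intro α hα
      by_cases h : α = MM
      · subst h
        simp only [sub_self, zero_mul, Real.exp_zero, mul_one, if_pos rfl]
        rw [← hC'MM] at *
        exact tendsto_const_nhds
      · have hαlt : α < MM := by
          rw [hT'def] at hα
          rcases Finset.mem_insert.mp hα with h' | h'
          · rw [h']; exact hcsMM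
          · exact hMMmax α h' h
        have h1 : Tendsto (fun t : ℝ => (α - MM) * t) atTop atBot := by
          simpa [mul_comm] using tendsto_id.atTop_mul_const_of_neg (by linarith : α - MM < 0)
        have h2 := Real.tendsto_exp_atBot.comp h1
        have h3 := h2.const_mul (C' α)
        simp only [Function.comp, mul_zero] at h3
        simpa [h] using h3
    have hsum := tendsto_finset_sum T' hterm
    have : (∑ α ∈ T', if α = MM then C MM else 0) = C MM := by
      rw [Finset.sum_ite_eq' T' MM (fun _ => C MM)]
      simp [hT'def, Finset.mem_insert_of_mem hMT]
    rwa [this] at hsum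
  have htail : ∀ᶠ t in atTop, G t < 0 := by
    filter_upwards [htendsto.eventually_lt_const hCMM] with t ht
    rw [hfac t]
    exact mul_neg_of_pos_of_neg (Real.exp_pos _) ht
  obtain ⟨t₂, ht₂⟩ := (htail.and (eventually_gt_atTop tp)).exists
  -- three zeros by IVT
  have hz₁ : ∃ z₁ ∈ Set.Ioo tm 0, G z₁ = 0 := by
    have := intermediate_value_Ioo' (le_of_lt htmneg) hGcont.continuousOn
      (Set.mem_Ioo.mpr ⟨hG0, hGtm⟩)
    obtain ⟨z, hz, hz0⟩ := this
    exact ⟨z, hz, hz0⟩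
  have hz₂ : ∃ z₂ ∈ Set.Ioo 0 tp, G z₂ = 0 := by
    have := intermediate_value_Ioo (le_of_lt htppos) hGcont.continuousOn
      (Set.mem_Ioo.mpr ⟨hG0, hGtp⟩)
    obtain ⟨z, hz, hz0⟩ := this
    exact ⟨z, hz, hz0⟩
  have hz₃ : ∃ z₃ ∈ Set.Ioo tp t₂, G z₃ = 0 := by
    have := intermediate_value_Ioo' (le_of_lt ht₂.2) hGcont.continuousOn
      (Set.mem_Ioo.mpr ⟨ht₂.1, hGtp⟩)
    obtain ⟨z, hz, hz0⟩ := this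
    exact ⟨z, hz, hz0⟩
  obtain ⟨z₁, hz₁m, hz₁0⟩ := hz₁
  obtain ⟨z₂, hz₂m, hz₂0⟩ := hz₂
  obtain ⟨z₃, hz₃m, hz₃0⟩ := hz₃
  have hspec' : ∀ α ∈ T', (α < cc → C' α ≤ 0) ∧ (cc < α → α < dd → 0 ≤ C' α) ∧
      (dd < α → C' α ≤ 0) ∧ α ≠ cc ∧ α ≠ dd := by
    intro α hα
    rw [hT'def] at hα
    rcases Finset.mem_insert.mp hα with h | h
    · subst h
      rw [hC'def, Function.update_self]
      exact ⟨fun h' => absurd h' (by linarith), fun _ _ => hε.le,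
        fun h' => absurd h' (by linarith), ne_of_gt hcs1, ne_of_lt hcs2⟩
    · have hC'α : C' α = C α := by
        rw [hC'def]; exact Function.update_of_ne (by rintro rfl; exact hcsT h) _ _
      rw [hC'α]
      exact hspec α h
  have hC'cs : 0 < C' cstar := by rw [hC'def, Function.update_self]; exact hε
  exact rolle3 T' C' cc dd hspec' cstar (by rw [hT'def]; exact Finset.mem_insert_self _ _)
    hcs1 hcs2 hC'cs (lt_trans hz₁m.2 hz₂m.1) (lt_trans hz₂m.2 hz₃m.1)
    (by rw [hGdef] at hz₁0; exact hz₁0) (by rw [hGdef] at hz₂0; exact hz₂0)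
    (by rw [hGdef] at hz₃0; exact hz₃0)

private lemma exp_max_le (p q : ℝ) : Real.exp (max p q) ≤ Real.exp p + Real.exp q := by
  rcases max_cases p q with ⟨h1, _⟩ | ⟨h1, _⟩ <;> rw [h1] <;>
    linarith [Real.exp_pos p, Real.exp_pos q]

private lemma min_le_exp (p q : ℝ) : min (Real.exp p) (Real.exp q) ≤ Real.exp (min p q) := by
  rcases min_cases p q with ⟨h1, _⟩ | ⟨h1, _⟩ <;> rw [h1]
  · exact min_le_left _ _
  · exact min_le_right _ _

private lemma sgF_le_pos_add {n : ℕ} (S : Finset (Fin n → ℝ)) (c : (Fin n → ℝ) → ℝ)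
    (μ₀ : Fin n → ℝ) (hμ₀S : μ₀ ∈ S) (hμ₀c : c μ₀ < 0) (y : Fin n → ℝ) :
    sgF S c y ≤ (∑ μ ∈ S.filter (fun μ => 0 < c μ), c μ * Real.exp (sgDot μ y))
      + c μ₀ * Real.exp (sgDot μ₀ y) := by
  classical
  rw [sgF, ← Finset.sum_filter_add_sum_filter_not S (fun μ => 0 < c μ)
    (fun μ => c μ * Real.exp (sgDot μ y))]
  have hμ₀mem : μ₀ ∈ S.filter (fun μ => ¬ 0 < c μ) :=
    Finset.mem_filter.mpr ⟨hμ₀S, by intro h; linarith⟩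
  rw [Finset.sum_eq_add_sum_sdiff_singleton_of_mem hμ₀mem (fun μ => c μ * Real.exp (sgDot μ y))]
  have hrest : ∑ μ ∈ (S.filter (fun μ => ¬ 0 < c μ)) \ {μ₀}, c μ * Real.exp (sgDot μ y) ≤ 0 := by
    refine Finset.sum_nonpos fun μ hμ => ?_
    have hμ' := Finset.mem_filter.mp (Finset.mem_sdiff.mp hμ).1
    exact mul_nonpos_iff.mpr (Or.inr ⟨le_of_not_gt hμ'.2, (Real.exp_pos _).le⟩)
  linarith

private lemma estimate_main {n : ℕ} (S : Finset (Fin n → ℝ)) (c : (Fin n → ℝ) → ℝ)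
    (v w β₁ β₂ : Fin n → ℝ) (a b u vv : ℝ)
    (hposa : ∀ μ ∈ S, 0 < c μ → sgDot μ v ≤ a) (hposb : ∀ μ ∈ S, 0 < c μ → b ≤ sgDot μ v)
    (hposw : ∀ μ ∈ S, 0 < c μ → sgDot μ w ≤ u)
    (hβ₁S : β₁ ∈ S) (hβ₁c : c β₁ < 0) (hβ₁a : a ≤ sgDot β₁ v) (hβ₁w : vv ≤ sgDot β₁ w)
    (hβ₂S : β₂ ∈ S) (hβ₂c : c β₂ < 0) (hβ₂b : sgDot β₂ v ≤ b) (hβ₂w : vv ≤ sgDot β₂ w)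
    (huv : u < vv) (y₀ y₁ : Fin n → ℝ) :
    ∃ s₀ : ℝ, 0 ≤ s₀ ∧ ∀ s, s₀ ≤ s → ∀ t θ : ℝ, 0 ≤ θ → θ ≤ 1 →
      sgF S c (y₀ + θ • (y₁ - y₀) + s • w + t • v) < 0 := by
  classical
  set My := ∑ μ ∈ S.filter (fun μ => 0 < c μ),
    c μ * (Real.exp (sgDot μ y₀) + Real.exp (sgDot μ y₁)) with hMydef
  have hMy0 : 0 ≤ My :=
    Finset.sum_nonneg fun μ hμ => mul_nonneg ((Finset.mem_filter.mp hμ).2).le (by positivity)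
  set K₁ := (-c β₁) * min (Real.exp (sgDot β₁ y₀)) (Real.exp (sgDot β₁ y₁)) with hK₁def
  have hK₁0 : 0 < K₁ := mul_pos (by linarith) (lt_min (Real.exp_pos _) (Real.exp_pos _))
  set K₂ := (-c β₂) * min (Real.exp (sgDot β₂ y₀)) (Real.exp (sgDot β₂ y₁)) with hK₂def
  have hK₂0 : 0 < K₂ := mul_pos (by linarith) (lt_min (Real.exp_pos _) (Real.exp_pos _))
  have hlim : Tendsto (fun s : ℝ => My * Real.exp (s * (u - vv))) atTop (nhds 0) := by
    have h1 : Tendsto (fun s : ℝ => s * (u - vv)) atTop atBot :=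
      tendsto_id.atTop_mul_const_of_neg (by linarith)
    have h2 := Real.tendsto_exp_atBot.comp h1
    have h3 := h2.const_mul My
    simpa using h3
  have hev := hlim.eventually_lt_const (lt_min hK₁0 hK₂0)
  obtain ⟨s₁, hs₁⟩ := eventually_atTop.mp hev
  refine ⟨max s₁ 0, le_max_right _ _, ?_⟩
  intro s hs t θ hθ0 hθ1
  have hs0 : 0 ≤ s := le_trans (le_max_right s₁ 0) hs
  have hsK := hs₁ s (le_trans (le_max_left _ _) hs)
  have hsK₁ : My * Real.exp (s * (u - vv)) < K₁ := lt_of_lt_of_le hsK (min_le_left _ _)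
  have hsK₂ : My * Real.exp (s * (u - vv)) < K₂ := lt_of_lt_of_le hsK (min_le_right _ _)
  have hdz : ∀ μ : Fin n → ℝ, sgDot μ (y₀ + θ • (y₁ - y₀) + s • w + t • v)
      = (sgDot μ y₀ + θ * (sgDot μ y₁ - sgDot μ y₀)) + s * sgDot μ w + t * sgDot μ v := by
    intro μ
    simp only [sgDot_add, sgDot_smul, sgDot_sub]
  have hyθ_le : ∀ μ : Fin n → ℝ,
      sgDot μ y₀ + θ * (sgDot μ y₁ - sgDot μ y₀) ≤ max (sgDot μ y₀) (sgDot μ y₁) := by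
    intro μ
    rcases le_total (sgDot μ y₀) (sgDot μ y₁) with h | h
    · have := le_max_right (sgDot μ y₀) (sgDot μ y₁); nlinarith
    · have := le_max_left (sgDot μ y₀) (sgDot μ y₁); nlinarith
  have hyθ_ge : ∀ μ : Fin n → ℝ,
      min (sgDot μ y₀) (sgDot μ y₁) ≤ sgDot μ y₀ + θ * (sgDot μ y₁ - sgDot μ y₀) := by
    intro μ
    rcases le_total (sgDot μ y₀) (sgDot μ y₁) with h | h
    · have := min_le_left (sgDot μ y₀) (sgDot μ y₁); nlinarith
    · have := min_le_right (sgDot μ y₀) (sgDot μ y₁); nlinarith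
  -- generic one-sided bound
  have core : ∀ (β : Fin n → ℝ) (K e : ℝ), β ∈ S → c β < 0 →
      K = (-c β) * min (Real.exp (sgDot β y₀)) (Real.exp (sgDot β y₁)) →
      (∀ μ ∈ S, 0 < c μ → t * sgDot μ v ≤ t * e) → (t * e ≤ t * sgDot β v) →
      vv ≤ sgDot β w →
      My * Real.exp (s * (u - vv)) < K →
      sgF S c (y₀ + θ • (y₁ - y₀) + s • w + t • v) < 0 := by
    intro β K e hβS hβc hKdef hμe hβe hβw hK
    have hFle := sgF_le_pos_add S c β hβS hβc (y₀ + θ • (y₁ - y₀) + s • w + t • v)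
    have hpos_le : ∑ μ ∈ S.filter (fun μ => 0 < c μ),
        c μ * Real.exp (sgDot μ (y₀ + θ • (y₁ - y₀) + s • w + t • v))
        ≤ My * (Real.exp (s * u) * Real.exp (t * e)) := by
      rw [hMydef, Finset.sum_mul]
      refine Finset.sum_le_sum fun μ hμ => ?_
      obtain ⟨hμS, hμc⟩ := Finset.mem_filter.mp hμ
      have h1 : sgDot μ (y₀ + θ • (y₁ - y₀) + s • w + t • v)
          ≤ max (sgDot μ y₀) (sgDot μ y₁) + s * u + t * e := by
        rw [hdz μ]
        have e2 : s * sgDot μ w ≤ s * u := mul_le_mul_of_nonneg_left (hposw μ hμS hμc) hs0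
        have e3 := hμe μ hμS hμc
        have e1 := hyθ_le μ
        linarith
      have h2 : Real.exp (sgDot μ (y₀ + θ • (y₁ - y₀) + s • w + t • v))
          ≤ (Real.exp (sgDot μ y₀) + Real.exp (sgDot μ y₁)) * (Real.exp (s*u) * Real.exp (t*e)) := by
        calc Real.exp (sgDot μ (y₀ + θ • (y₁ - y₀) + s • w + t • v))
            ≤ Real.exp (max (sgDot μ y₀) (sgDot μ y₁) + s * u + t * e) := Real.exp_le_exp.mpr h1
          _ = Real.exp (max (sgDot μ y₀) (sgDot μ y₁)) * (Real.exp (s*u) * Real.exp (t*e)) := by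
              rw [← Real.exp_add, ← Real.exp_add, add_assoc]
          _ ≤ _ := mul_le_mul_of_nonneg_right (exp_max_le _ _) (by positivity)
      calc c μ * Real.exp (sgDot μ (y₀ + θ • (y₁ - y₀) + s • w + t • v))
          ≤ c μ * ((Real.exp (sgDot μ y₀) + Real.exp (sgDot μ y₁)) * (Real.exp (s*u) * Real.exp (t*e))) :=
            mul_le_mul_of_nonneg_left h2 hμc.le
        _ = c μ * (Real.exp (sgDot μ y₀) + Real.exp (sgDot μ y₁)) * (Real.exp (s*u) * Real.exp (t*e)) := by
            ring
    have hβle : c β * Real.exp (sgDot β (y₀ + θ • (y₁ - y₀) + s • w + t • v))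
        ≤ -(K * (Real.exp (s * vv) * Real.exp (t * e))) := by
      have h1 : min (sgDot β y₀) (sgDot β y₁) + s * vv + t * e
          ≤ sgDot β (y₀ + θ • (y₁ - y₀) + s • w + t • v) := by
        rw [hdz β]
        have e2 : s * vv ≤ s * sgDot β w := mul_le_mul_of_nonneg_left hβw hs0
        linarith [hyθ_ge β, hβe]
      have h2 : min (Real.exp (sgDot β y₀)) (Real.exp (sgDot β y₁)) * (Real.exp (s*vv) * Real.exp (t*e))
          ≤ Real.exp (sgDot β (y₀ + θ • (y₁ - y₀) + s • w + t • v)) := by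
        calc min (Real.exp (sgDot β y₀)) (Real.exp (sgDot β y₁)) * (Real.exp (s*vv) * Real.exp (t*e))
            ≤ Real.exp (min (sgDot β y₀) (sgDot β y₁)) * (Real.exp (s*vv) * Real.exp (t*e)) :=
              mul_le_mul_of_nonneg_right (min_le_exp _ _) (by positivity)
          _ = Real.exp (min (sgDot β y₀) (sgDot β y₁) + s * vv + t * e) := by
              rw [← Real.exp_add, ← Real.exp_add, add_assoc]
          _ ≤ _ := Real.exp_le_exp.mpr h1
      have h3 := mul_le_mul_of_nonpos_left h2 hβc.le
      have h4 : c β * (min (Real.exp (sgDot β y₀)) (Real.exp (sgDot β y₁))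
          * (Real.exp (s*vv) * Real.exp (t*e))) = -(K * (Real.exp (s*vv) * Real.exp (t*e))) := by
        rw [hKdef]; ring
      linarith
    have hbr : My * Real.exp (s * u) < K * Real.exp (s * vv) := by
      have hsplit : Real.exp (s * u) = Real.exp (s * (u - vv)) * Real.exp (s * vv) := by
        rw [← Real.exp_add]; congr 1; ring
      have h5 := mul_lt_mul_of_pos_right hK (Real.exp_pos (s * vv))
      rw [hsplit, ← mul_assoc]
      exact h5
    have hfin : My * (Real.exp (s*u) * Real.exp (t*e)) - K * (Real.exp (s*vv) * Real.exp (t*e))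
        < 0 := by
      have h6 := mul_lt_mul_of_pos_right hbr (Real.exp_pos (t * e))
      nlinarith [Real.exp_pos (t*e)]
    linarith
  rcases le_total 0 t with ht | ht
  · exact core β₁ K₁ a hβ₁S hβ₁c hK₁def
      (fun μ hμS hμc => mul_le_mul_of_nonneg_left (hposa μ hμS hμc) ht)
      (mul_le_mul_of_nonneg_left hβ₁a ht) hβ₁w hsK₁
  · exact core β₂ K₂ b hβ₂S hβ₂c hK₂def
      (fun μ hμS hμc => mul_le_mul_of_nonpos_left (hposb μ hμS hμc) ht)
      (mul_le_mul_of_nonpos_left hβ₂b ht) hβ₂w hsK₂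

private lemma estimate_down {n : ℕ} (S : Finset (Fin n → ℝ)) (c : (Fin n → ℝ) → ℝ)
    (v w γ : Fin n → ℝ) (b : ℝ)
    (hposb : ∀ μ ∈ S, 0 < c μ → b ≤ sgDot μ v)
    (hγS : γ ∈ S) (hγc : c γ < 0) (hγb : sgDot γ v < b)
    (y : Fin n → ℝ) (s₀ : ℝ) (hs₀ : 0 ≤ s₀) :
    ∃ T₀ : ℝ, T₀ ≤ 0 ∧ ∀ T : ℝ, T ≤ T₀ → ∀ s, 0 ≤ s → s ≤ s₀ →
      sgF S c (y + T • v + s • w) < 0 := by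
  classical
  set M := ∑ μ ∈ S.filter (fun μ => 0 < c μ),
    c μ * Real.exp (sgDot μ y + s₀ * |sgDot μ w|) with hMdef
  have hM0 : 0 ≤ M :=
    Finset.sum_nonneg fun μ hμ =>
      mul_nonneg ((Finset.mem_filter.mp hμ).2).le (Real.exp_pos _).le
  set KK := (-c γ) * Real.exp (sgDot γ y - s₀ * |sgDot γ w|) with hKKdef
  have hKK0 : 0 < KK := mul_pos (by linarith) (Real.exp_pos _)
  have hlim : Tendsto (fun T : ℝ => M * Real.exp (T * (b - sgDot γ v))) atBot (nhds 0) := by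
    have h1 : Tendsto (fun T : ℝ => T * (b - sgDot γ v)) atBot atBot :=
      tendsto_id.atBot_mul_const (by linarith)
    have h2 := Real.tendsto_exp_atBot.comp h1
    have h3 := h2.const_mul M
    simpa using h3
  have hev := hlim.eventually_lt_const hKK0
  obtain ⟨T₁, hT₁⟩ := eventually_atBot.mp hev
  refine ⟨min T₁ 0, min_le_right _ _, ?_⟩
  intro T hT s hsl hsr
  have hT0 : T ≤ 0 := le_trans hT (min_le_right _ _)
  have hTT₁ : T ≤ T₁ := le_trans hT (min_le_left _ _)
  have hbr := hT₁ T hTT₁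
  have hdz : ∀ μ : Fin n → ℝ, sgDot μ (y + T • v + s • w)
      = sgDot μ y + T * sgDot μ v + s * sgDot μ w := by
    intro μ; simp only [sgDot_add, sgDot_smul]
  have hFle := sgF_le_pos_add S c γ hγS hγc (y + T • v + s • w)
  have hpos_le : ∑ μ ∈ S.filter (fun μ => 0 < c μ), c μ * Real.exp (sgDot μ (y + T • v + s • w))
      ≤ M * Real.exp (T * b) := by
    rw [hMdef, Finset.sum_mul]
    refine Finset.sum_le_sum fun μ hμ => ?_
    obtain ⟨hμS, hμc⟩ := Finset.mem_filter.mp hμ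
    have h1 : sgDot μ (y + T • v + s • w) ≤ sgDot μ y + s₀ * |sgDot μ w| + T * b := by
      rw [hdz μ]
      have e2 : T * sgDot μ v ≤ T * b := mul_le_mul_of_nonpos_left (hposb μ hμS hμc) hT0
      have e3 : s * sgDot μ w ≤ s₀ * |sgDot μ w| := by
        nlinarith [le_abs_self (sgDot μ w), abs_nonneg (sgDot μ w)]
      linarith
    calc c μ * Real.exp (sgDot μ (y + T • v + s • w))
        ≤ c μ * (Real.exp (sgDot μ y + s₀ * |sgDot μ w|) * Real.exp (T * b)) := by
          refine mul_le_mul_of_nonneg_left ?_ hμc.le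
          rw [← Real.exp_add]
          exact Real.exp_le_exp.mpr h1
      _ = c μ * Real.exp (sgDot μ y + s₀ * |sgDot μ w|) * Real.exp (T * b) := by ring
  have hγle : c γ * Real.exp (sgDot γ (y + T • v + s • w))
      ≤ -(KK * Real.exp (T * sgDot γ v)) := by
    have h1 : sgDot γ y - s₀ * |sgDot γ w| + T * sgDot γ v ≤ sgDot γ (y + T • v + s • w) := by
      rw [hdz γ]
      have e3 : -(s₀ * |sgDot γ w|) ≤ s * sgDot γ w := by
        nlinarith [neg_abs_le (sgDot γ w), abs_nonneg (sgDot γ w)]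
      linarith
    have h2 : Real.exp (sgDot γ y - s₀ * |sgDot γ w|) * Real.exp (T * sgDot γ v)
        ≤ Real.exp (sgDot γ (y + T • v + s • w)) := by
      rw [← Real.exp_add]
      exact Real.exp_le_exp.mpr h1
    have h3 := mul_le_mul_of_nonpos_left h2 hγc.le
    have h4 : c γ * (Real.exp (sgDot γ y - s₀ * |sgDot γ w|) * Real.exp (T * sgDot γ v))
        = -(KK * Real.exp (T * sgDot γ v)) := by rw [hKKdef]; ring
    linarith
  have hfin : M * Real.exp (T * b) < KK * Real.exp (T * sgDot γ v) := by
    have hsplit : Real.exp (T * b) = Real.exp (T * (b - sgDot γ v)) * Real.exp (T * sgDot γ v) := by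
      rw [← Real.exp_add]; congr 1; ring
    have h5 := mul_lt_mul_of_pos_right hbr (Real.exp_pos (T * sgDot γ v))
    rw [hsplit, ← mul_assoc]
    exact h5
  linarith

private lemma estimate_up {n : ℕ} (S : Finset (Fin n → ℝ)) (c : (Fin n → ℝ) → ℝ)
    (v w γ : Fin n → ℝ) (a : ℝ)
    (hposa : ∀ μ ∈ S, 0 < c μ → sgDot μ v ≤ a)
    (hγS : γ ∈ S) (hγc : c γ < 0) (hγa : a < sgDot γ v)
    (y : Fin n → ℝ) (s₀ : ℝ) (hs₀ : 0 ≤ s₀) :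
    ∃ T₀ : ℝ, 0 ≤ T₀ ∧ ∀ T : ℝ, T₀ ≤ T → ∀ s, 0 ≤ s → s ≤ s₀ →
      sgF S c (y + T • v + s • w) < 0 := by
  classical
  set M := ∑ μ ∈ S.filter (fun μ => 0 < c μ),
    c μ * Real.exp (sgDot μ y + s₀ * |sgDot μ w|) with hMdef
  have hM0 : 0 ≤ M :=
    Finset.sum_nonneg fun μ hμ =>
      mul_nonneg ((Finset.mem_filter.mp hμ).2).le (Real.exp_pos _).le
  set KK := (-c γ) * Real.exp (sgDot γ y - s₀ * |sgDot γ w|) with hKKdef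
  have hKK0 : 0 < KK := mul_pos (by linarith) (Real.exp_pos _)
  have hlim : Tendsto (fun T : ℝ => M * Real.exp (T * (a - sgDot γ v))) atTop (nhds 0) := by
    have h1 : Tendsto (fun T : ℝ => T * (a - sgDot γ v)) atTop atBot :=
      tendsto_id.atTop_mul_const_of_neg (by linarith)
    have h2 := Real.tendsto_exp_atBot.comp h1
    have h3 := h2.const_mul M
    simpa using h3
  have hev := hlim.eventually_lt_const hKK0
  obtain ⟨T₁, hT₁⟩ := eventually_atTop.mp hev
  refine ⟨max T₁ 0, le_max_right _ _, ?_⟩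
  intro T hT s hsl hsr
  have hT0 : 0 ≤ T := le_trans (le_max_right T₁ 0) hT
  have hTT₁ : T₁ ≤ T := le_trans (le_max_left _ _) hT
  have hbr := hT₁ T hTT₁
  have hdz : ∀ μ : Fin n → ℝ, sgDot μ (y + T • v + s • w)
      = sgDot μ y + T * sgDot μ v + s * sgDot μ w := by
    intro μ; simp only [sgDot_add, sgDot_smul]
  have hFle := sgF_le_pos_add S c γ hγS hγc (y + T • v + s • w)
  have hpos_le : ∑ μ ∈ S.filter (fun μ => 0 < c μ), c μ * Real.exp (sgDot μ (y + T • v + s • w))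
      ≤ M * Real.exp (T * a) := by
    rw [hMdef, Finset.sum_mul]
    refine Finset.sum_le_sum fun μ hμ => ?_
    obtain ⟨hμS, hμc⟩ := Finset.mem_filter.mp hμ
    have h1 : sgDot μ (y + T • v + s • w) ≤ sgDot μ y + s₀ * |sgDot μ w| + T * a := by
      rw [hdz μ]
      have e2 : T * sgDot μ v ≤ T * a := mul_le_mul_of_nonneg_left (hposa μ hμS hμc) hT0
      have e3 : s * sgDot μ w ≤ s₀ * |sgDot μ w| := by
        nlinarith [le_abs_self (sgDot μ w), abs_nonneg (sgDot μ w)]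
      linarith
    calc c μ * Real.exp (sgDot μ (y + T • v + s • w))
        ≤ c μ * (Real.exp (sgDot μ y + s₀ * |sgDot μ w|) * Real.exp (T * a)) := by
          refine mul_le_mul_of_nonneg_left ?_ hμc.le
          rw [← Real.exp_add]
          exact Real.exp_le_exp.mpr h1
      _ = c μ * Real.exp (sgDot μ y + s₀ * |sgDot μ w|) * Real.exp (T * a) := by ring
  have hγle : c γ * Real.exp (sgDot γ (y + T • v + s • w))
      ≤ -(KK * Real.exp (T * sgDot γ v)) := by
    have h1 : sgDot γ y - s₀ * |sgDot γ w| + T * sgDot γ v ≤ sgDot γ (y + T • v + s • w) := by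
      rw [hdz γ]
      have e3 : -(s₀ * |sgDot γ w|) ≤ s * sgDot γ w := by
        nlinarith [neg_abs_le (sgDot γ w), abs_nonneg (sgDot γ w)]
      linarith
    have h2 : Real.exp (sgDot γ y - s₀ * |sgDot γ w|) * Real.exp (T * sgDot γ v)
        ≤ Real.exp (sgDot γ (y + T • v + s • w)) := by
      rw [← Real.exp_add]
      exact Real.exp_le_exp.mpr h1
    have h3 := mul_le_mul_of_nonpos_left h2 hγc.le
    have h4 : c γ * (Real.exp (sgDot γ y - s₀ * |sgDot γ w|) * Real.exp (T * sgDot γ v))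
        = -(KK * Real.exp (T * sgDot γ v)) := by rw [hKKdef]; ring
    linarith
  have hfin : M * Real.exp (T * a) < KK * Real.exp (T * sgDot γ v) := by
    have hsplit : Real.exp (T * a) = Real.exp (T * (a - sgDot γ v)) * Real.exp (T * sgDot γ v) := by
      rw [← Real.exp_add]; congr 1; ring
    have h5 := mul_lt_mul_of_pos_right hbr (Real.exp_pos (T * sgDot γ v))
    rw [hsplit, ← mul_assoc]
    exact h5
  linarith

private lemma joinedIn_segment {n : ℕ} {Y : Set (Fin n → ℝ)} {p q : Fin n → ℝ}
    (h : ∀ θ : ℝ, 0 ≤ θ → θ ≤ 1 → p + θ • (q - p) ∈ Y) : JoinedIn Y p q := by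
  have hcont : Continuous fun θ : unitInterval => p + (θ : ℝ) • (q - p) :=
    continuous_const.add ((continuous_subtype_val).smul continuous_const)
  refine ⟨⟨⟨fun θ => p + (θ : ℝ) • (q - p), hcont⟩, ?_, ?_⟩, fun θ => h θ θ.2.1 θ.2.2⟩
  · show p + ((0 : unitInterval) : ℝ) • (q - p) = p
    norm_num
  · show p + ((1 : unitInterval) : ℝ) • (q - p) = q
    norm_num

end AuxiliaryForStmt9

/-- Theorem 2.14. -/
theorem stmt_9 (n : ℕ) (S : Finset (Fin n → ℝ)) (c : (Fin n → ℝ) → ℝ)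
    (hc : ∀ μ ∈ S, c μ ≠ 0)
    (v : Fin n → ℝ) (hv : v ≠ 0) (a b : ℝ) (hab : b ≤ a)
    (hpos : sigPosSet S c ⊆ Hminus v a ∩ Hplus v b)
    (hneg : sigNegSet S c ⊆ (HminusO v a ∩ HplusO v b)ᶜ)
    (hstricta : (sigNegSet S c ∩ HplusO v a).Nonempty)
    (hstrictb : (sigNegSet S c ∩ HminusO v b).Nonempty)
    (β₁ β₂ : Fin n → ℝ) (hβ₁ : β₁ ∈ sigNegSet S c) (hβ₂ : β₂ ∈ sigNegSet S c)
    (hβ₁a : β₁ ∈ Hplus v a) (hβ₂b : β₂ ∈ Hminus v b)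
    (hdisj : convexHull ℝ {β₁, β₂} ∩ convexHull ℝ (sigPosSet S c) = ∅) :
    IsConnected (negSet S c) := by
  classical
  -- Pass to logarithmic coordinates.
  have hNeq : negSet S c = sgExp '' {y | sgF S c y < 0} := by
    ext x
    constructor
    · rintro ⟨hxpos, hxneg⟩
      refine ⟨fun i => Real.log (x i), ?_, ?_⟩
      · show sgF S c _ < 0
        rw [← sig_sgExp]
        have hxe : sgExp (fun i => Real.log (x i)) = x :=
          funext fun i => Real.exp_log (hxpos i)
        rw [hxe]; exact hxneg
      · exact funext fun i => Real.exp_log (hxpos i)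
    · rintro ⟨y, hy, rfl⟩
      exact ⟨fun i => Real.exp_pos _, by rw [sig_sgExp]; exact hy⟩
  suffices hY : IsConnected {y : Fin n → ℝ | sgF S c y < 0} by
    rw [hNeq]
    exact hY.image _ (continuous_pi fun i =>
      Real.continuous_exp.comp (continuous_apply i)).continuousOn
  -- Clean form of the hypotheses.
  obtain ⟨hβ₁S, hβ₁c⟩ := hβ₁
  obtain ⟨hβ₂S, hβ₂c⟩ := hβ₂
  have hβ₁a' : a ≤ sgDot β₁ v := by
    have h := hβ₁a
    simp only [Hplus, Set.mem_setOf_eq, sgDot_comm] at h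
    exact h
  have hβ₂b' : sgDot β₂ v ≤ b := by
    have h := hβ₂b
    simp only [Hminus, Set.mem_setOf_eq, sgDot_comm] at h
    exact h
  obtain ⟨γ₁, hγ₁⟩ := hstricta
  obtain ⟨⟨hγ₁S, hγ₁c⟩, hγ₁a⟩ := hγ₁
  have hγ₁a' : a < sgDot γ₁ v := by
    have h := hγ₁a
    simp only [HplusO, Set.mem_setOf_eq, sgDot_comm] at h
    exact h
  obtain ⟨γ₂, hγ₂⟩ := hstrictb
  obtain ⟨⟨hγ₂S, hγ₂c⟩, hγ₂b⟩ := hγ₂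
  have hγ₂b' : sgDot γ₂ v < b := by
    have h := hγ₂b
    simp only [HminusO, Set.mem_setOf_eq, sgDot_comm] at h
    exact h
  have hposa' : ∀ μ ∈ S, 0 < c μ → sgDot μ v ≤ a := by
    intro μ hμS hμc
    have h := (hpos (show μ ∈ sigPosSet S c from ⟨hμS, hμc⟩)).1
    simp only [Hminus, Set.mem_setOf_eq, sgDot_comm] at h
    exact h
  have hposb' : ∀ μ ∈ S, 0 < c μ → b ≤ sgDot μ v := by
    intro μ hμS hμc
    have h := (hpos (show μ ∈ sigPosSet S c from ⟨hμS, hμc⟩)).2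
    simp only [Hplus, Set.mem_setOf_eq, sgDot_comm] at h
    exact h
  have hnega' : ∀ μ ∈ S, c μ < 0 → sgDot μ v ≤ b ∨ a ≤ sgDot μ v := by
    intro μ hμS hμc
    have h := hneg (show μ ∈ sigNegSet S c from ⟨hμS, hμc⟩)
    simp only [Set.mem_compl_iff, Set.mem_inter_iff, HminusO, HplusO, Set.mem_setOf_eq,
      sgDot_comm, not_and_or, not_lt] at h
    exact h.elim (fun h' => Or.inr h') (fun h' => Or.inl h')
  -- Separating functional for the convex hulls.
  have hfinP : (sigPosSet S c).Finite := Set.Finite.subset S.finite_toSet (fun μ hμ => hμ.1)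
  have hfinB : ({β₁, β₂} : Set (Fin n → ℝ)).Finite :=
    (Set.finite_singleton β₂).insert β₁
  have hdisj' : Disjoint (convexHull ℝ (sigPosSet S c))
      (convexHull ℝ ({β₁, β₂} : Set (Fin n → ℝ))) := by
    rw [Set.disjoint_iff_inter_eq_empty, Set.inter_comm]
    exact hdisj
  obtain ⟨f, u, vv, hfu, huv, hfv⟩ :=
    geometric_hahn_banach_compact_closed (convex_convexHull ℝ _) (hfinP.isCompact_convexHull (𝕜 := ℝ))
      (convex_convexHull ℝ _) (hfinB.isCompact_convexHull (𝕜 := ℝ)).isClosed hdisj'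
  obtain ⟨w, hwdef⟩ : ∃ w : Fin n → ℝ, w = fun i => f (Pi.single i 1) := ⟨_, rfl⟩
  have hdw : ∀ μ : Fin n → ℝ, sgDot μ w = f μ := by
    intro μ
    have h := Finset.univ_sum_single μ
    conv_rhs => rw [← h]
    rw [map_sum, sgDot]
    refine Finset.sum_congr rfl fun i _ => ?_
    have h2 : (Pi.single i (μ i) : Fin n → ℝ) = μ i • (Pi.single i 1 : Fin n → ℝ) := by
      rw [← Pi.single_smul]; norm_num
    rw [h2, map_smul, smul_eq_mul, hwdef]
  have hposw : ∀ μ ∈ S, 0 < c μ → sgDot μ w ≤ u := by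
    intro μ hμS hμc
    rw [hdw]
    exact (hfu μ (subset_convexHull ℝ _ ⟨hμS, hμc⟩)).le
  have hβ₁w : vv ≤ sgDot β₁ w := by
    rw [hdw]
    exact (hfv β₁ (subset_convexHull ℝ _ (by simp))).le
  have hβ₂w : vv ≤ sgDot β₂ w := by
    rw [hdw]
    exact (hfv β₂ (subset_convexHull ℝ _ (by simp))).le
  -- One-dimensional structure along the direction v.
  have hline : ∀ y : Fin n → ℝ, sgF S c y < 0 →
      (∀ t : ℝ, 0 ≤ t → sgF S c (y + t • v) < 0) ∨
      (∀ t : ℝ, t ≤ 0 → sgF S c (y + t • v) < 0) := by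
    intro y hy
    have hrepr : ∀ t : ℝ, sgF S c (y + t • v)
        = ∑ μ ∈ S, (c μ * Real.exp (sgDot μ y)) * Real.exp (sgDot μ v * t) := by
      intro t
      unfold sgF
      refine Finset.sum_congr rfl fun μ _ => ?_
      rw [sgDot_add, sgDot_smul, Real.exp_add, mul_comm t (sgDot μ v)]
      ring
    have hos := oneSide S (fun μ => c μ * Real.exp (sgDot μ y)) (fun μ => sgDot μ v) a b hab
      (fun μ hμ => mul_ne_zero (hc μ hμ) (Real.exp_ne_zero _))
      (fun μ hμ hp => by
        have hp' : 0 < c μ * Real.exp (sgDot μ y) := hp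
        have hcμ : 0 < c μ := by
          by_contra hcon
          push_neg at hcon
          have : c μ * Real.exp (sgDot μ y) ≤ 0 :=
            mul_nonpos_iff.mpr (Or.inr ⟨hcon, (Real.exp_pos _).le⟩)
          linarith
        exact ⟨hposb' μ hμ hcμ, hposa' μ hμ hcμ⟩)
      (fun μ hμ hn => by
        have hn' : c μ * Real.exp (sgDot μ y) < 0 := hn
        have hcμ : c μ < 0 := by
          by_contra hcon
          push_neg at hcon
          have : 0 ≤ c μ * Real.exp (sgDot μ y) :=
            mul_nonneg hcon (Real.exp_pos _).le
          linarith
        exact hnega' μ hμ hcμ)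
      γ₁ hγ₁S (mul_neg_of_neg_of_pos hγ₁c (Real.exp_pos _)) hγ₁a'
      (by show (∑ μ ∈ S, c μ * Real.exp (sgDot μ y)) < 0; exact hy)
    rcases hos with h | h
    · exact Or.inl fun t ht => by rw [hrepr t]; exact h t ht
    · exact Or.inr fun t ht => by rw [hrepr t]; exact h t ht
  -- Path-connectivity of the negative set in logarithmic coordinates.
  have hjoin : ∀ y : Fin n → ℝ, sgF S c y < 0 → ∀ y' : Fin n → ℝ, sgF S c y' < 0 →
      JoinedIn {y : Fin n → ℝ | sgF S c y < 0} y y' := by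
    intro y hy y' hy'
    obtain ⟨s₀, hs₀0, hs₀⟩ := estimate_main S c v w β₁ β₂ a b u vv
      hposa' hposb' hposw hβ₁S hβ₁c hβ₁a' hβ₁w hβ₂S hβ₂c hβ₂b' hβ₂w huv y y'
    have hinst_y : ∀ s : ℝ, s₀ ≤ s → ∀ t : ℝ, sgF S c (y + s • w + t • v) < 0 := by
      intro s hss t
      have h := hs₀ s hss t 0 le_rfl zero_le_one
      rwa [zero_smul, add_zero] at h
    have hinst_y' : ∀ s : ℝ, s₀ ≤ s → ∀ t : ℝ, sgF S c (y' + s • w + t • v) < 0 := by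
      intro s hss t
      have h := hs₀ s hss t 1 zero_le_one le_rfl
      have he : y + (1:ℝ) • (y' - y) + s • w + t • v = y' + s • w + t • v := by
        module
      rwa [he] at h
    have reach : ∀ z : Fin n → ℝ, sgF S c z < 0 →
        (∀ s : ℝ, s₀ ≤ s → ∀ t : ℝ, sgF S c (z + s • w + t • v) < 0) →
        JoinedIn {y : Fin n → ℝ | sgF S c y < 0} z (z + s₀ • w) := by
      intro z hz hinst
      rcases hline z hz with hup | hdn
      · obtain ⟨T₀, hT₀0, hT₀⟩ := estimate_up S c v w γ₁ a hposa' hγ₁S hγ₁c hγ₁a' z s₀ hs₀0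
        have J1 : JoinedIn {y : Fin n → ℝ | sgF S c y < 0} z (z + T₀ • v) := by
          refine joinedIn_segment fun θ h0 h1 => ?_
          have he : z + θ • (z + T₀ • v - z) = z + (θ * T₀) • v := by module
          rw [Set.mem_setOf_eq, he]
          exact hup (θ * T₀) (mul_nonneg h0 hT₀0)
        have J2 : JoinedIn {y : Fin n → ℝ | sgF S c y < 0} (z + T₀ • v)
            (z + T₀ • v + s₀ • w) := by
          refine joinedIn_segment fun θ h0 h1 => ?_
          have he : z + T₀ • v + θ • (z + T₀ • v + s₀ • w - (z + T₀ • v))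
              = z + T₀ • v + (θ * s₀) • w := by module
          rw [Set.mem_setOf_eq, he]
          exact hT₀ T₀ le_rfl (θ * s₀) (mul_nonneg h0 hs₀0) (by nlinarith)
        have J3 : JoinedIn {y : Fin n → ℝ | sgF S c y < 0} (z + T₀ • v + s₀ • w)
            (z + s₀ • w) := by
          refine joinedIn_segment fun θ h0 h1 => ?_
          have he : z + T₀ • v + s₀ • w + θ • (z + s₀ • w - (z + T₀ • v + s₀ • w))
              = z + s₀ • w + ((1 - θ) * T₀) • v := by module
          rw [Set.mem_setOf_eq, he]
          exact hinst s₀ le_rfl ((1 - θ) * T₀)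
        exact (J1.trans J2).trans J3
      · obtain ⟨T₀, hT₀0, hT₀⟩ := estimate_down S c v w γ₂ b hposb' hγ₂S hγ₂c hγ₂b' z s₀ hs₀0
        have J1 : JoinedIn {y : Fin n → ℝ | sgF S c y < 0} z (z + T₀ • v) := by
          refine joinedIn_segment fun θ h0 h1 => ?_
          have he : z + θ • (z + T₀ • v - z) = z + (θ * T₀) • v := by module
          rw [Set.mem_setOf_eq, he]
          exact hdn (θ * T₀) (mul_nonpos_iff.mpr (Or.inl ⟨h0, hT₀0⟩))
        have J2 : JoinedIn {y : Fin n → ℝ | sgF S c y < 0} (z + T₀ • v)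
            (z + T₀ • v + s₀ • w) := by
          refine joinedIn_segment fun θ h0 h1 => ?_
          have he : z + T₀ • v + θ • (z + T₀ • v + s₀ • w - (z + T₀ • v))
              = z + T₀ • v + (θ * s₀) • w := by module
          rw [Set.mem_setOf_eq, he]
          exact hT₀ T₀ le_rfl (θ * s₀) (mul_nonneg h0 hs₀0) (by nlinarith)
        have J3 : JoinedIn {y : Fin n → ℝ | sgF S c y < 0} (z + T₀ • v + s₀ • w)
            (z + s₀ • w) := by
          refine joinedIn_segment fun θ h0 h1 => ?_
          have he : z + T₀ • v + s₀ • w + θ • (z + s₀ • w - (z + T₀ • v + s₀ • w))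
              = z + s₀ • w + ((1 - θ) * T₀) • v := by module
          rw [Set.mem_setOf_eq, he]
          exact hinst s₀ le_rfl ((1 - θ) * T₀)
        exact (J1.trans J2).trans J3
    have hAy := reach y hy hinst_y
    have hAy' := reach y' hy' hinst_y'
    have J4 : JoinedIn {y : Fin n → ℝ | sgF S c y < 0} (y + s₀ • w) (y' + s₀ • w) := by
      refine joinedIn_segment fun θ h0 h1 => ?_
      have he : y + s₀ • w + θ • (y' + s₀ • w - (y + s₀ • w))
          = y + θ • (y' - y) + s₀ • w + (0:ℝ) • v := by module
      rw [Set.mem_setOf_eq, he]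
      exact hs₀ s₀ le_rfl 0 θ h0 h1
    exact (hAy.trans J4).trans hAy'.symm
  -- Non-emptiness.
  have hne : ∃ y : Fin n → ℝ, sgF S c y < 0 := by
    obtain ⟨s₀, hs₀0, hs₀⟩ := estimate_main S c v w β₁ β₂ a b u vv
      hposa' hposb' hposw hβ₁S hβ₁c hβ₁a' hβ₁w hβ₂S hβ₂c hβ₂b' hβ₂w huv 0 0
    refine ⟨(0 : Fin n → ℝ) + s₀ • w + (0:ℝ) • v, ?_⟩
    have h := hs₀ s₀ le_rfl 0 0 le_rfl zero_le_one
    rwa [zero_smul, add_zero] at h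
  obtain ⟨x₀, hx₀⟩ := hne
  have hpc : IsPathConnected {y : Fin n → ℝ | sgF S c y < 0} :=
    ⟨x₀, hx₀, fun {y'} hy' => hjoin x₀ hx₀ y' hy'⟩
  exact hpc.isConnected
end

section
/- Let f : ℝ_{>0}^n → ℝ, f(x) = ∑_{μ ∈ σ(f)} c_μ x^μ be a signomial. If the Newton polytope N(f) has dimension at least 2 and f has exactly one positive exponent vector (i.e. #σ_+(f) = 1), then f^{-1}(ℝ_{<0}) is non-empty and connected. -/
open Finset

/-- `σ₊(f)`: the positive exponent vectors. -/
def sigPos' {n : ℕ} (S : Finset (Fin n → ℝ)) (c : (Fin n → ℝ) → ℝ) : Set (Fin n → ℝ) :=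
  {μ | μ ∈ S ∧ 0 < c μ}

/-- `σ₋(f)`: the negative exponent vectors. -/
def sigNeg' {n : ℕ} (S : Finset (Fin n → ℝ)) (c : (Fin n → ℝ) → ℝ) : Set (Fin n → ℝ) :=
  {μ | μ ∈ S ∧ c μ < 0}

namespace Stmt10Aux

variable {n : ℕ}

/-- dot product on `Fin n → ℝ`. -/
noncomputable def dotp (u v : Fin n → ℝ) : ℝ := ∑ i, u i * v i

lemma dotp_comm (u v : Fin n → ℝ) : dotp u v = dotp v u := by
  unfold dotp; exact Finset.sum_congr rfl fun i _ => mul_comm _ _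

lemma dotp_add_left (u v w : Fin n → ℝ) : dotp (u + v) w = dotp u w + dotp v w := by
  unfold dotp
  rw [← Finset.sum_add_distrib]
  exact Finset.sum_congr rfl fun i _ => by simp [add_mul]

lemma dotp_smul_left (r : ℝ) (u w : Fin n → ℝ) : dotp (r • u) w = r * dotp u w := by
  unfold dotp
  rw [Finset.mul_sum]
  exact Finset.sum_congr rfl fun i _ => by simp [mul_assoc]

lemma dotp_add_right (u v w : Fin n → ℝ) : dotp u (v + w) = dotp u v + dotp u w := by
  rw [dotp_comm, dotp_add_left, dotp_comm v u, dotp_comm w u]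

lemma dotp_smul_right (r : ℝ) (u w : Fin n → ℝ) : dotp u (r • w) = r * dotp u w := by
  rw [dotp_comm, dotp_smul_left, dotp_comm w u]

lemma dotp_sub_right (u v w : Fin n → ℝ) : dotp u (v - w) = dotp u v - dotp u w := by
  have : v - w = v + (-1 : ℝ) • w := by ring_nf; simp [sub_eq_add_neg]
  rw [this, dotp_add_right, dotp_smul_right]; ring

lemma dotp_sub_left (u v w : Fin n → ℝ) : dotp (u - v) w = dotp u w - dotp v w := by
  rw [dotp_comm, dotp_sub_right, dotp_comm w u, dotp_comm w v]

lemma dotp_self_pos {u : Fin n → ℝ} (hu : u ≠ 0) : 0 < dotp u u := by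
  obtain ⟨i, hi⟩ : ∃ i, u i ≠ 0 := by
    by_contra h; push_neg at h; exact hu (funext h)
  exact Finset.sum_pos' (fun j _ => mul_self_nonneg _)
    ⟨i, Finset.mem_univ i, mul_self_pos.2 hi⟩

lemma dotp_linear (u : Fin n → ℝ) : IsLinearMap ℝ (dotp u) :=
  ⟨fun x y => dotp_add_right u x y, fun r x => by rw [dotp_smul_right]; rfl⟩

lemma dotp_continuous (u : Fin n → ℝ) : Continuous (dotp u) := by
  unfold dotp
  exact continuous_finset_sum _ fun i _ => continuous_const.mul (continuous_apply i)

/-- For linearly independent `u v`, the map `y ↦ (dotp u y, dotp v y)` is surjective. -/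
lemma exists_dotp_eq {u v : Fin n → ℝ}
    (hind : ∀ s t : ℝ, s • u + t • v = 0 → s = 0 ∧ t = 0) (a b : ℝ) :
    ∃ y, dotp u y = a ∧ dotp v y = b := by
  have hu : u ≠ 0 := by
    intro h
    have := hind 1 0 (by simp [h])
    exact one_ne_zero this.1
  have hv : v ≠ 0 := by
    intro h
    have := hind 0 1 (by simp [h])
    exact one_ne_zero this.2
  have huu := dotp_self_pos hu
  have hvv := dotp_self_pos hv
  set w : Fin n → ℝ := v - (dotp u v / dotp u u) • u with hw
  set w' : Fin n → ℝ := u - (dotp u v / dotp v v) • v with hw'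
  have huw : dotp u w = 0 := by
    rw [hw, dotp_sub_right, dotp_smul_right]
    field_simp
    ring
  have hvw' : dotp v w' = 0 := by
    rw [hw', dotp_sub_right, dotp_smul_right, dotp_comm v u]
    field_simp
    ring
  have hwne : w ≠ 0 := by
    intro h0
    have h1 : (dotp u v / dotp u u) • u + (-1 : ℝ) • v = -w := by rw [hw]; module
    rw [h0, neg_zero] at h1
    exact (by norm_num : (-1:ℝ) ≠ 0) (hind _ _ h1).2
  have hw'ne : w' ≠ 0 := by
    intro h0
    have h1 : (1 : ℝ) • u + (-(dotp u v / dotp v v)) • v = w' := by rw [hw']; module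
    rw [h0] at h1
    exact one_ne_zero (hind _ _ h1).1
  have hvw : dotp v w = dotp w w := by
    have hv' : v = w + (dotp u v / dotp u u) • u := by rw [hw]; module
    calc dotp v w = dotp (w + (dotp u v / dotp u u) • u) w := by rw [← hv']
      _ = dotp w w + (dotp u v / dotp u u) * dotp u w := by rw [dotp_add_left, dotp_smul_left]
      _ = dotp w w := by rw [huw]; ring
  have huw' : dotp u w' = dotp w' w' := by
    have hu' : u = w' + (dotp u v / dotp v v) • v := by rw [hw']; module
    calc dotp u w' = dotp (w' + (dotp u v / dotp v v) • v) w' := by rw [← hu']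
      _ = dotp w' w' + (dotp u v / dotp v v) * dotp v w' := by rw [dotp_add_left, dotp_smul_left]
      _ = dotp w' w' := by rw [hvw']; ring
  have hww := dotp_self_pos hwne
  have hw'w' := dotp_self_pos hw'ne
  refine ⟨(a / dotp w' w') • w' + (b / dotp w w) • w, ?_, ?_⟩
  · rw [dotp_add_right, dotp_smul_right, dotp_smul_right, huw', huw]
    field_simp
    ring
  · rw [dotp_add_right, dotp_smul_right, dotp_smul_right, hvw', hvw]
    field_simp
    ring

/-- Meeting lemma for half-spaces. -/
lemma halfspace_meet (φ : (Fin n → ℝ) →L[ℝ] ℝ) (u : ℝ)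
    {νa νb : Fin n → ℝ} (ta tb : ℝ)
    (hind : ∀ s t : ℝ, s • νa + t • νb = 0 → s = 0 ∧ t = 0)
    {y : Fin n → ℝ} (hy : u < φ y) :
    (∃ z, u < φ z ∧ ta < dotp νa z) ∨ (∃ z, u < φ z ∧ tb < dotp νb z) := by
  by_contra hcon
  push_neg at hcon
  obtain ⟨ha, hb⟩ := hcon
  have hνa : νa ≠ 0 := fun h => one_ne_zero (hind 1 0 (by simp [h])).1
  by_cases hφ : ∀ d, φ d = 0
  · obtain ⟨z, hz1, _⟩ := exists_dotp_eq hind (ta + 1) 0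
    have hz : u < φ z := by rw [hφ z, ← hφ y]; exact hy
    have := ha z hz
    rw [hz1] at this
    linarith
  · push_neg at hφ
    obtain ⟨d₀, hd₀⟩ := hφ
    set e := (φ d₀)⁻¹ • d₀ with he
    have hφe : φ e = 1 := by rw [he, map_smul, smul_eq_mul, inv_mul_cancel₀ hd₀]
    have key : ∀ (ν : Fin n → ℝ) (tt : ℝ), (∀ z, u < φ z → dotp ν z ≤ tt) →
        ∀ z, dotp ν z = dotp ν e * φ z := by
      intro ν tt hν
      have step1 : ∀ d, 0 ≤ φ d → dotp ν d ≤ 0 := by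
        intro d hd
        by_contra hpos
        push_neg at hpos
        have hbase : ∀ s : ℝ, 0 ≤ s → dotp ν y + s * dotp ν d ≤ tt := by
          intro s hs
          have hmem : u < φ (y + s • d) := by
            rw [map_add, map_smul]
            have h2 : 0 ≤ s * φ d := mul_nonneg hs hd
            simp only [smul_eq_mul]
            linarith
          have := hν _ hmem
          rwa [dotp_add_right, dotp_smul_right] at this
        have h0 := hbase 0 le_rfl
        have hs := hbase ((tt - dotp ν y + 1) / dotp ν d)
          (div_nonneg (by linarith) hpos.le)
        rw [div_mul_cancel₀] at hs
        · linarith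
        · exact ne_of_gt hpos
      have step2 : ∀ d, φ d = 0 → dotp ν d = 0 := by
        intro d hd
        have h1 := step1 d (le_of_eq hd.symm)
        have h2 := step1 (-d) (by rw [map_neg, hd, neg_zero])
        have hneg : dotp ν (-d) = -dotp ν d := by
          have h3 : (-d : Fin n → ℝ) = (-1 : ℝ) • d := by module
          rw [h3, dotp_smul_right]; ring
        rw [hneg] at h2
        linarith
      intro z
      have hk : φ (z - φ z • e) = 0 := by
        rw [map_sub, map_smul, hφe]; simp
      have := step2 _ hk
      rw [dotp_sub_right, dotp_smul_right] at this
      linarith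
    have hA := key νa ta ha
    have hB := key νb tb hb
    set la := dotp νa e with hla'
    set lb := dotp νb e with hlb'
    set q : Fin n → ℝ := lb • νa + (-la) • νb with hq
    have hqq : dotp q q = 0 := by
      rw [hq, dotp_add_left, dotp_smul_left, dotp_smul_left, hA q, hB q]
      ring
    have hq0 : q = 0 := by
      by_contra h
      exact (ne_of_gt (dotp_self_pos h)) hqq
    obtain ⟨h1, h2⟩ := hind _ _ (by rw [← hq]; exact hq0)
    have hla0 : la = 0 := neg_eq_zero.mp h2
    have : dotp νa νa = 0 := by rw [hA νa, hla0]; ring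
    exact (ne_of_gt (dotp_self_pos hνa)) this

/-- From `finrank (vectorSpan S) ≥ 2` extract two independent difference vectors. -/
lemma exists_indep_pair {S : Finset (Fin n → ℝ)} (p : Fin n → ℝ)
    (hdim : 2 ≤ Module.finrank ℝ ↥(vectorSpan ℝ (↑S : Set (Fin n → ℝ)))) :
    ∃ μa ∈ S, ∃ μb ∈ S,
      ∀ s t : ℝ, s • (μa - p) + t • (μb - p) = 0 → s = 0 ∧ t = 0 := by
  by_contra hcon
  push_neg at hcon
  have hle : Module.finrank ℝ ↥(vectorSpan ℝ (↑S : Set (Fin n → ℝ))) ≤ 1 := by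
    by_cases hex : ∃ μ0 ∈ S, μ0 - p ≠ 0
    · obtain ⟨μ0, hμ0, h0⟩ := hex
      have hsub : ∀ μ ∈ S, μ - p ∈ Submodule.span ℝ {μ0 - p} := by
        intro μ hμ
        obtain ⟨s, t, hst, hor⟩ := hcon μ0 hμ0 μ hμ
        by_cases ht : t = 0
        · exfalso
          rw [ht, zero_smul, add_zero] at hst
          rcases smul_eq_zero.mp hst with hs | hv
          · exact hor hs ht
          · exact h0 hv
        · have h1 : t • (μ - p) = (-s) • (μ0 - p) := by
            rw [neg_smul]
            exact eq_neg_of_add_eq_zero_right hst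
          have h2 : t • (μ - p) = t • ((-(s / t)) • (μ0 - p)) := by
            rw [h1, smul_smul]
            congr 1
            field_simp
          have h3 := smul_right_injective (Fin n → ℝ) ht h2
          rw [h3]
          exact Submodule.smul_mem _ _ (Submodule.mem_span_singleton_self _)
      have hV : vectorSpan ℝ (↑S : Set (Fin n → ℝ)) ≤ Submodule.span ℝ {μ0 - p} := by
        rw [vectorSpan_def]
        apply Submodule.span_le.mpr
        rintro x hx
        rw [Set.mem_vsub] at hx
        obtain ⟨μ1, h1, μ2, h2, rfl⟩ := hx
        have hsplit : (μ1 -ᵥ μ2 : Fin n → ℝ) = (μ1 - p) - (μ2 - p) := by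
          rw [vsub_eq_sub, sub_sub_sub_cancel_right]
        rw [hsplit]
        exact Submodule.sub_mem _ (hsub μ1 h1) (hsub μ2 h2)
      calc Module.finrank ℝ ↥(vectorSpan ℝ (↑S : Set (Fin n → ℝ)))
          ≤ Module.finrank ℝ ↥(Submodule.span ℝ {μ0 - p}) := Submodule.finrank_mono hV
        _ = 1 := finrank_span_singleton h0
    · push_neg at hex
      have hV : vectorSpan ℝ (↑S : Set (Fin n → ℝ)) ≤ ⊥ := by
        rw [vectorSpan_def]
        apply Submodule.span_le.mpr
        rintro x hx
        rw [Set.mem_vsub] at hx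
        obtain ⟨μ1, h1, μ2, h2, rfl⟩ := hx
        simp only [Submodule.bot_coe, Set.mem_singleton_iff]
        have e1 := hex μ1 h1
        have e2 := hex μ2 h2
        rw [vsub_eq_sub]
        rw [sub_eq_zero] at e1 e2
        rw [e1, e2, sub_self]
      have := Submodule.finrank_mono hV
      simp only [finrank_bot] at this
      omega
  omega

end Stmt10Aux



open Stmt10Aux in
theorem stmt_10' (n : ℕ) (S : Finset (Fin n → ℝ)) (c : (Fin n → ℝ) → ℝ)
    (hc : ∀ μ ∈ S, c μ ≠ 0)
    (hdim : 2 ≤ Module.finrank ℝ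
      ↥(vectorSpan ℝ (convexHull ℝ (↑S : Set (Fin n → ℝ)))))
    (hpos : (sigPos' S c).ncard = 1) :
    IsConnected (negSet S c) := by
  classical
  obtain ⟨p, hp⟩ := Set.ncard_eq_one.mp hpos
  have hpmem : p ∈ sigPos' S c := by rw [hp]; exact Set.mem_singleton p
  obtain ⟨hpS, hcp⟩ := hpmem
  have hneg : ∀ μ ∈ S, μ ≠ p → c μ < 0 := by
    intro μ hμ hne
    by_contra h
    push_neg at h
    have hmem : μ ∈ sigPos' S c := ⟨hμ, lt_of_le_of_ne h (Ne.symm (hc μ hμ))⟩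
    rw [hp] at hmem
    exact hne hmem
  -- transfer dimension hypothesis
  have hspan : vectorSpan ℝ (↑S : Set (Fin n → ℝ))
      = vectorSpan ℝ (convexHull ℝ (↑S : Set (Fin n → ℝ))) := by
    rw [← direction_affineSpan, ← direction_affineSpan, affineSpan_convexHull]
  rw [← hspan] at hdim
  obtain ⟨μa, hμaS, μb, hμbS, hind⟩ := exists_indep_pair p hdim
  have hνa0 : μa - p ≠ 0 := fun h => one_ne_zero (hind 1 0 (by simp [h])).1
  have hνb0 : μb - p ≠ 0 := fun h => one_ne_zero (hind 0 1 (by simp [h])).2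
  have hμaE : μa ∈ S.erase p :=
    Finset.mem_erase.mpr ⟨fun h => hνa0 (by rw [h, sub_self]), hμaS⟩
  have hμbE : μb ∈ S.erase p :=
    Finset.mem_erase.mpr ⟨fun h => hνb0 (by rw [h, sub_self]), hμbS⟩
  -- the signomial in logarithmic coordinates, and its normalized version
  set F : (Fin n → ℝ) → ℝ := fun y => ∑ μ ∈ S, c μ * Real.exp (dotp μ y) with hF
  set G : (Fin n → ℝ) → ℝ :=
    fun y => ∑ μ ∈ S.erase p, (-(c μ)) * Real.exp (dotp (μ - p) y) with hG
  have hFG : ∀ y, F y = Real.exp (dotp p y) * (c p - G y) := by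
    intro y
    rw [hF, hG]
    simp only
    rw [← Finset.add_sum_erase S _ hpS]
    have hterm : ∀ μ ∈ S.erase p, c μ * Real.exp (dotp μ y)
        = -(Real.exp (dotp p y) * ((-(c μ)) * Real.exp (dotp (μ - p) y))) := by
      intro μ _
      have hdm : dotp μ y = dotp p y + dotp (μ - p) y := by
        rw [← dotp_add_left]
        congr 1
        abel
      rw [hdm, Real.exp_add]
      ring
    rw [Finset.sum_congr rfl hterm]
    rw [Finset.sum_neg_distrib, ← Finset.mul_sum]
    ring
  have hAiff : ∀ y, F y < 0 ↔ c p < G y := by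
    intro y
    rw [hFG y]
    have hE := Real.exp_pos (dotp p y)
    constructor
    · intro h
      nlinarith
    · intro h
      have : c p - G y < 0 := by linarith
      exact mul_neg_of_pos_of_neg hE this
  -- single negative term forces membership
  have hhalf : ∀ μ ∈ S.erase p, ∀ y,
      Real.log (c p / (-(c μ))) < dotp (μ - p) y → c p < G y := by
    intro μ hμ y hy
    have hμp := (Finset.mem_erase.mp hμ).1
    have hμS := (Finset.mem_erase.mp hμ).2
    have hcμ : c μ < 0 := hneg μ hμS hμp
    have hd : (0:ℝ) < -(c μ) := by linarith
    have hq : (0:ℝ) < c p / (-(c μ)) := div_pos hcp hd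
    have h1 : c p < (-(c μ)) * Real.exp (dotp (μ - p) y) := by
      have hlt : c p / (-(c μ)) < Real.exp (dotp (μ - p) y) := by
        have := Real.exp_lt_exp.mpr hy
        rwa [Real.exp_log hq] at this
      calc c p = (-(c μ)) * (c p / (-(c μ))) := by
            rw [mul_comm, div_mul_cancel₀ _ (ne_of_gt hd)]
        _ < (-(c μ)) * Real.exp (dotp (μ - p) y) := by
            exact mul_lt_mul_of_pos_left hlt hd
    have h2 : (-(c μ)) * Real.exp (dotp (μ - p) y) ≤ G y := by
      rw [hG]
      apply Finset.single_le_sum (f := fun ν => (-(c ν)) * Real.exp (dotp (ν - p) y)) ?_ hμ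
      intro ν hν
      have : c ν < 0 := hneg ν (Finset.mem_erase.mp hν).2 (Finset.mem_erase.mp hν).1
      exact mul_nonneg (by linarith) (Real.exp_pos _).le
    linarith
  set ta := Real.log (c p / (-(c μa))) with hta
  set tb := Real.log (c p / (-(c μb))) with htb
  obtain ⟨x₀, hx0a, hx0b⟩ := exists_dotp_eq hind (ta + 1) (tb + 1)
  have hx0A : F x₀ < 0 :=
    (hAiff x₀).mpr (hhalf μa hμaE x₀ (by rw [hx0a]; linarith))
  -- convexity and closedness of the sublevel set C
  have hGconv : ∀ (x y : Fin n → ℝ) (a b : ℝ), 0 ≤ a → 0 ≤ b → a + b = 1 →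
      G (a • x + b • y) ≤ a * G x + b * G y := by
    intro x y a b ha hb hab
    rw [hG]
    simp only
    calc ∑ μ ∈ S.erase p, (-(c μ)) * Real.exp (dotp (μ - p) (a • x + b • y))
        ≤ ∑ μ ∈ S.erase p, (a * ((-(c μ)) * Real.exp (dotp (μ - p) x))
            + b * ((-(c μ)) * Real.exp (dotp (μ - p) y))) := by
          apply Finset.sum_le_sum
          intro μ hμ
          have hd : (0:ℝ) ≤ -(c μ) := by
            have := hneg μ (Finset.mem_erase.mp hμ).2 (Finset.mem_erase.mp hμ).1
            linarith
          have hdot : dotp (μ - p) (a • x + b • y)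
              = a * dotp (μ - p) x + b * dotp (μ - p) y := by
            rw [dotp_add_right, dotp_smul_right, dotp_smul_right]
          rw [hdot]
          have hexp := convexOn_exp.2 (Set.mem_univ (dotp (μ - p) x))
            (Set.mem_univ (dotp (μ - p) y)) ha hb hab
          simp only [smul_eq_mul] at hexp
          calc (-(c μ)) * Real.exp (a * dotp (μ - p) x + b * dotp (μ - p) y)
              ≤ (-(c μ)) * (a * Real.exp (dotp (μ - p) x)
                  + b * Real.exp (dotp (μ - p) y)) :=
                mul_le_mul_of_nonneg_left hexp hd
            _ = a * ((-(c μ)) * Real.exp (dotp (μ - p) x))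
                  + b * ((-(c μ)) * Real.exp (dotp (μ - p) y)) := by ring
      _ = a * (∑ μ ∈ S.erase p, (-(c μ)) * Real.exp (dotp (μ - p) x))
            + b * (∑ μ ∈ S.erase p, (-(c μ)) * Real.exp (dotp (μ - p) y)) := by
          rw [Finset.sum_add_distrib, ← Finset.mul_sum, ← Finset.mul_sum]
  have hCconv : Convex ℝ {z : Fin n → ℝ | G z ≤ c p} := by
    intro x hx y hy a b ha hb hab
    simp only [Set.mem_setOf_eq] at hx hy ⊢
    have h1 := hGconv x y a b ha hb hab
    have h2 : a * G x ≤ a * c p := mul_le_mul_of_nonneg_left hx ha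
    have h3 : b * G y ≤ b * c p := mul_le_mul_of_nonneg_left hy hb
    nlinarith
  have hGcont : Continuous G := by
    rw [hG]
    apply continuous_finset_sum
    intro μ _
    exact continuous_const.mul (Real.continuous_exp.comp (dotp_continuous (μ - p)))
  have hCclosed : IsClosed {z : Fin n → ℝ | G z ≤ c p} :=
    isClosed_le hGcont continuous_const
  -- preconnectedness of the negative set in log coordinates
  have hVaA : ∀ y, ta < dotp (μa - p) y → F y < 0 :=
    fun y h => (hAiff y).mpr (hhalf μa hμaE y h)
  have hVbA : ∀ y, tb < dotp (μb - p) y → F y < 0 :=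
    fun y h => (hAiff y).mpr (hhalf μb hμbE y h)
  have hVaprec : IsPreconnected {z : Fin n → ℝ | ta < dotp (μa - p) z} :=
    (convex_halfSpace_gt (dotp_linear (μa - p)) ta).isPreconnected
  have hVbprec : IsPreconnected {z : Fin n → ℝ | tb < dotp (μb - p) z} :=
    (convex_halfSpace_gt (dotp_linear (μb - p)) tb).isPreconnected
  have hx0Va : x₀ ∈ {z : Fin n → ℝ | ta < dotp (μa - p) z} := by
    simp only [Set.mem_setOf_eq, hx0a]; linarith
  have hx0Vb : x₀ ∈ {z : Fin n → ℝ | tb < dotp (μb - p) z} := by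
    simp only [Set.mem_setOf_eq, hx0b]; linarith
  have hKprec : IsPreconnected ({z : Fin n → ℝ | ta < dotp (μa - p) z}
      ∪ {z : Fin n → ℝ | tb < dotp (μb - p) z}) :=
    IsPreconnected.union x₀ hx0Va hx0Vb hVaprec hVbprec
  have hApre : IsPreconnected {y : Fin n → ℝ | F y < 0} := by
    apply isPreconnected_of_forall x₀
    intro y hy
    have hyC : y ∉ {z : Fin n → ℝ | G z ≤ c p} := by
      simp only [Set.mem_setOf_eq, not_le]
      exact (hAiff y).mp hy
    obtain ⟨φ, u, hsep, hyu⟩ := geometric_hahn_banach_closed_point hCconv hCclosed hyC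
    have hPsub : {z : Fin n → ℝ | u < φ z} ⊆ {y : Fin n → ℝ | F y < 0} := by
      intro z hz
      simp only [Set.mem_setOf_eq] at hz ⊢
      rcases lt_or_ge (c p) (G z) with h | h
      · exact (hAiff z).mpr h
      · exact absurd hz (not_lt.mpr (hsep z h).le)
    have hPprec : IsPreconnected {z : Fin n → ℝ | u < φ z} := by
      refine (convex_halfSpace_gt ?_ u).isPreconnected
      exact ⟨fun a b => map_add φ a b, fun r a => map_smul φ r a⟩
    set K := {z : Fin n → ℝ | ta < dotp (μa - p) z}
      ∪ {z : Fin n → ℝ | tb < dotp (μb - p) z} with hK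
    have hKA : K ⊆ {y : Fin n → ℝ | F y < 0} := by
      rintro z (hz | hz)
      · exact hVaA z hz
      · exact hVbA z hz
    obtain ⟨q, hq1, hq2⟩ | ⟨q, hq1, hq2⟩ := halfspace_meet φ u ta tb hind hyu
    · refine ⟨{z : Fin n → ℝ | u < φ z} ∪ K, ?_, ?_, ?_, ?_⟩
      · exact Set.union_subset hPsub hKA
      · exact Or.inr (Or.inl hx0Va)
      · exact Or.inl hyu
      · exact IsPreconnected.union q hq1 (Or.inl hq2) hPprec hKprec
    · refine ⟨{z : Fin n → ℝ | u < φ z} ∪ K, ?_, ?_, ?_, ?_⟩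
      · exact Set.union_subset hPsub hKA
      · exact Or.inr (Or.inl hx0Va)
      · exact Or.inl hyu
      · exact IsPreconnected.union q hq1 (Or.inr hq2) hPprec hKprec
  -- transport along the exponential homeomorphism
  have hsig : ∀ y : Fin n → ℝ, sig S c (fun i => Real.exp (y i)) = F y := by
    intro y
    rw [hF]
    unfold sig
    apply Finset.sum_congr rfl
    intro μ _
    congr 1
    have hterm : ∀ i : Fin n, Real.exp (y i) ^ (μ i) = Real.exp (μ i * y i) := by
      intro i
      rw [Real.rpow_def_of_pos (Real.exp_pos _), Real.log_exp, mul_comm]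
    rw [Finset.prod_congr rfl (fun i _ => hterm i), ← Real.exp_sum]
    rfl
  have himg : negSet S c
      = (fun (y : Fin n → ℝ) (i : Fin n) => Real.exp (y i)) '' {y | F y < 0} := by
    ext x
    constructor
    · rintro ⟨hxpos, hxneg⟩
      refine ⟨fun i => Real.log (x i), ?_, ?_⟩
      · show F (fun i => Real.log (x i)) < 0
        have hxe : (fun i => Real.exp (Real.log (x i))) = x :=
          funext fun i => Real.exp_log (hxpos i)
        rw [← hsig]
        rw [show (fun i => Real.exp ((fun j => Real.log (x j)) i)) = x from hxe]
        exact hxneg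
      · funext i
        exact Real.exp_log (hxpos i)
    · rintro ⟨y, hy, rfl⟩
      exact ⟨fun i => Real.exp_pos _, by rw [hsig]; exact hy⟩
  have hcontexp : Continuous fun (y : Fin n → ℝ) (i : Fin n) => Real.exp (y i) :=
    continuous_pi fun i => Real.continuous_exp.comp (continuous_apply i)
  rw [himg]
  exact ⟨⟨_, Set.mem_image_of_mem _ hx0A⟩,
    hApre.image _ hcontexp.continuousOn⟩



/-- Corollary 2.16: if the Newton polytope has dimension at least `2` and `f` has exactly
one positive exponent vector, then `f⁻¹(ℝ_{<0})` is non-empty and connected. -/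
theorem stmt_10 (n : ℕ) (S : Finset (Fin n → ℝ)) (c : (Fin n → ℝ) → ℝ)
    (hc : ∀ μ ∈ S, c μ ≠ 0)
    (hdim : 2 ≤ Module.finrank ℝ
      ↥(vectorSpan ℝ (convexHull ℝ (↑S : Set (Fin n → ℝ)))))
    (hpos : (sigPos' S c).ncard = 1) :
    IsConnected (negSet S c) :=
  stmt_10' n S c hc hdim hpos
end

section
/- Let f : ℝ_{>0}^n → ℝ, f(x) = ∑_{μ ∈ σ(f)} c_μ x^μ be a signomial. If there exists a face F of the Newton polytope N(f) such that σ_-(f) ⊆ F, then the number of connected components of f^{-1}(ℝ_{<0}) equals the number of connected components of f|_F^{-1}(ℝ_{<0}). -/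
open Finset

/-! ### Auxiliary material -/

section Aux

variable {n : ℕ}

/-- The open positive orthant. -/
def Orth (n : ℕ) : Set (Fin n → ℝ) := {x | ∀ i, 0 < x i}

lemma isOpen_orth : IsOpen (Orth n) := by
  have h : Orth n = ⋂ i, (fun x : Fin n → ℝ => x i) ⁻¹' Set.Ioi 0 := by
    ext x; simp [Orth]
  rw [h]
  exact isOpen_iInter_of_finite fun i => (continuous_apply i).isOpen_preimage _ isOpen_Ioi

lemma prod_rpow_pos {x : Fin n → ℝ} (hx : ∀ i, 0 < x i) (μ : Fin n → ℝ) :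
    0 < ∏ i, x i ^ μ i :=
  Finset.prod_pos fun i _ => Real.rpow_pos_of_pos (hx i) _

lemma contOn_sig (S : Finset (Fin n → ℝ)) (c : (Fin n → ℝ) → ℝ) :
    ContinuousOn (sig S c) (Orth n) := by
  apply continuousOn_finset_sum
  intro μ _
  apply ContinuousOn.mul continuousOn_const
  apply continuousOn_finset_prod
  intro i _
  intro x hx
  have h1 : ContinuousAt (fun y : Fin n → ℝ => y i) x := (continuous_apply i).continuousAt
  exact (h1.rpow_const (Or.inl (hx i).ne')).continuousWithinAt

open Classical in
lemma sigOn_eq (S : Finset (Fin n → ℝ)) (c : (Fin n → ℝ) → ℝ) (F : Set (Fin n → ℝ)) :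
    sigOn S c F = sig S (fun μ => if μ ∈ F then c μ else 0) := by
  funext x
  unfold sigOn sig
  refine Finset.sum_congr rfl fun μ _ => ?_
  by_cases h : μ ∈ F <;> simp [h]

lemma isOpen_negSetOn (S : Finset (Fin n → ℝ)) (c : (Fin n → ℝ) → ℝ) (F : Set (Fin n → ℝ)) :
    IsOpen (negSetOn S c F) := by
  have h : negSetOn S c F = Orth n ∩ (sigOn S c F) ⁻¹' Set.Iio 0 := rfl
  rw [h, sigOn_eq]
  exact (contOn_sig S _).isOpen_inter_preimage isOpen_orth isOpen_Iio

theorem rpow_sum' {α : Type*} {x : ℝ} (hx : 0 < x) (s : Finset α) (f : α → ℝ) :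
    x ^ (∑ i ∈ s, f i) = ∏ i ∈ s, x ^ f i := by
  classical
  induction s using Finset.induction_on with
  | empty => simp
  | @insert a s' h ih =>
    rw [Finset.sum_insert h, Finset.prod_insert h, Real.rpow_add hx, ih]

/-- The scaling `x ↦ (xᵢ t^{vᵢ})ᵢ`. -/
noncomputable def scal (v : Fin n → ℝ) (t : ℝ) (x : Fin n → ℝ) : Fin n → ℝ :=
  fun i => x i * t ^ v i

lemma scal_one (v : Fin n → ℝ) (x : Fin n → ℝ) : scal v 1 x = x := by
  funext i; simp [scal]

lemma scal_mem_orth {v : Fin n → ℝ} {t : ℝ} (ht : 0 < t) {x : Fin n → ℝ}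
    (hx : ∀ i, 0 < x i) : ∀ i, 0 < scal v t x i :=
  fun i => mul_pos (hx i) (Real.rpow_pos_of_pos ht _)

lemma prod_scal {v : Fin n → ℝ} {t : ℝ} (ht : 0 < t) {x : Fin n → ℝ}
    (hx : ∀ i, 0 < x i) (μ : Fin n → ℝ) :
    ∏ i, (scal v t x) i ^ μ i = (∏ i, x i ^ μ i) * t ^ (∑ i, v i * μ i) := by
  rw [rpow_sum' ht, ← Finset.prod_mul_distrib]
  refine Finset.prod_congr rfl fun i _ => ?_
  rw [scal, Real.mul_rpow (hx i).le (Real.rpow_pos_of_pos ht _).le, ← Real.rpow_mul ht.le]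

lemma sig_scal {v : Fin n → ℝ} {t : ℝ} (ht : 0 < t) {x : Fin n → ℝ}
    (hx : ∀ i, 0 < x i) (S : Finset (Fin n → ℝ)) (c : (Fin n → ℝ) → ℝ) :
    sig S c (scal v t x) = ∑ μ ∈ S, c μ * (∏ i, x i ^ μ i) * t ^ (∑ i, v i * μ i) := by
  unfold sig
  refine Finset.sum_congr rfl fun μ _ => ?_
  rw [prod_scal ht hx, mul_assoc]

lemma contOn_scal_t (v : Fin n → ℝ) (x : Fin n → ℝ) :
    ContinuousOn (fun t => scal v t x) (Set.Ioi (0:ℝ)) := by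
  rw [continuousOn_pi]
  intro i
  exact continuousOn_const.mul fun t ht =>
    (Real.continuousAt_rpow_const t (v i) (Or.inl (ne_of_gt ht))).continuousWithinAt

lemma cont_scal_x (v : Fin n → ℝ) (t : ℝ) : Continuous (scal v t) :=
  continuous_pi fun i => (continuous_apply i).mul continuous_const

lemma eq_cc_of_preconn {X P : Set (Fin n → ℝ)} (hP : IsPreconnected P) (hPX : P ⊆ X)
    {x y : Fin n → ℝ} (hx : x ∈ P) (hy : y ∈ P) :
    connectedComponentIn X x = connectedComponentIn X y :=
  connectedComponentIn_eq (hP.subset_connectedComponentIn hx hPX hy)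

lemma isConnComp_iff {X U : Set (Fin n → ℝ)} :
    IsConnComp X U ↔ ∃ x ∈ X, U = connectedComponentIn X x := by
  constructor
  · rintro ⟨hne, hsub, hpre, hmax⟩
    obtain ⟨x, hx⟩ := hne
    exact ⟨x, hsub hx, (hmax _ (hpre.subset_connectedComponentIn hx hsub)
      (connectedComponentIn_subset _ _) isPreconnected_connectedComponentIn).symm⟩
  · rintro ⟨x, hx, rfl⟩
    refine ⟨⟨x, mem_connectedComponentIn hx⟩, connectedComponentIn_subset _ _,
      isPreconnected_connectedComponentIn, fun W hUW hWX hW => ?_⟩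
    exact subset_antisymm
      (hW.subset_connectedComponentIn (hUW (mem_connectedComponentIn hx)) hWX) hUW

lemma IsConnComp.eq_cc {X U : Set (Fin n → ℝ)} (h : IsConnComp X U) {x : Fin n → ℝ}
    (hx : x ∈ U) : U = connectedComponentIn X x := by
  obtain ⟨hne, hsub, hpre, hmax⟩ := h
  exact (hmax _ (hpre.subset_connectedComponentIn hx hsub)
    (connectedComponentIn_subset _ _) isPreconnected_connectedComponentIn).symm

lemma cc_scal {X : Set (Fin n → ℝ)} (v : Fin n → ℝ) (x : Fin n → ℝ) {t : ℝ} (ht : 1 ≤ t)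
    (hx : ∀ s ∈ Set.Icc (1:ℝ) t, scal v s x ∈ X) :
    connectedComponentIn X x = connectedComponentIn X (scal v t x) := by
  have hcont : ContinuousOn (fun s => scal v s x) (Set.Icc (1:ℝ) t) :=
    (contOn_scal_t v x).mono fun s hs => lt_of_lt_of_le one_pos hs.1
  have hP : IsPreconnected ((fun s => scal v s x) '' Set.Icc (1:ℝ) t) :=
    isPreconnected_Icc.image _ hcont
  refine eq_cc_of_preconn hP ?_ ?_ ?_
  · rintro _ ⟨s, hs, rfl⟩; exact hx s hs
  · exact ⟨1, ⟨le_refl 1, ht⟩, scal_one v x⟩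
  · exact ⟨t, ⟨ht, le_refl t⟩, rfl⟩

end Aux

/-- Theorem 3.1: if all negative exponent vectors lie on a face `F` of the Newton polytope,
then `f⁻¹(ℝ_{<0})` and `(f|_F)⁻¹(ℝ_{<0})` have the same number of connected components. -/
theorem stmt_12 (n : ℕ) (S : Finset (Fin n → ℝ)) (c : (Fin n → ℝ) → ℝ)
    (hc : ∀ μ ∈ S, c μ ≠ 0)
    (F : Set (Fin n → ℝ)) (hF : ∃ v : Fin n → ℝ, F = faceOf S v)
    (hneg : sigNegSet S c ⊆ F) :
    compCard (negSet S c) = compCard (negSetOn S c F) := by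
  classical
  obtain ⟨v, rfl⟩ := hF
  rcases S.eq_empty_or_nonempty with rfl | hS
  · have h1 : negSet ∅ c = ∅ := by
      ext x; simp [negSet, sig]
    have h2 : negSetOn ∅ c (faceOf ∅ v) = ∅ := by
      ext x; simp [negSetOn, sigOn]
    rw [h1, h2]
  -- the maximal value of the linear functional on `S`
  set L : (Fin n → ℝ) → ℝ := fun μ => ∑ i, v i * μ i with hL
  set a : ℝ := S.sup' hS L with ha
  obtain ⟨μ₀, hμ₀S, hμ₀⟩ := S.exists_mem_eq_sup' hS L
  have ha_le : ∀ μ ∈ S, L μ ≤ a := fun μ hμ => Finset.le_sup' L hμ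
  have hlin : IsLinearMap ℝ L := by
    constructor
    · intro x y; simp [hL, Pi.add_apply, mul_add, Finset.sum_add_distrib]
    · intro r x; simp [hL, Pi.smul_apply, smul_eq_mul, Finset.mul_sum, mul_left_comm]
  have hull_le : ∀ ω ∈ convexHull ℝ (↑S : Set (Fin n → ℝ)), L ω ≤ a := by
    intro ω hω
    have hconv : Convex ℝ {w : Fin n → ℝ | L w ≤ a} := convex_halfSpace_le hlin a
    exact convexHull_min (fun μ hμ => ha_le μ (Finset.mem_coe.mp hμ)) hconv hω
  have hface : ∀ μ ∈ S, (μ ∈ faceOf S v ↔ L μ = a) := by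
    intro μ hμ
    constructor
    · rintro ⟨hμhull, hmax⟩
      refine le_antisymm (ha_le μ hμ) ?_
      have h := hmax μ₀ (subset_convexHull ℝ _ (Finset.mem_coe.mpr hμ₀S))
      rw [ha, hμ₀]; exact h
    · intro heq
      refine ⟨subset_convexHull ℝ _ (Finset.mem_coe.mpr hμ), fun ω hω => ?_⟩
      show L ω ≤ L μ
      rw [heq]; exact hull_le ω hω
  have hcpos : ∀ μ ∈ S, μ ∉ faceOf S v → 0 < c μ := by
    intro μ hμ hnF
    rcases (hc μ hμ).lt_or_gt with h | h
    · exact absurd (hneg ⟨hμ, h⟩) hnF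
    · exact h
  have hsub : negSet S c ⊆ negSetOn S c (faceOf S v) := by
    rintro x ⟨hx, hxneg⟩
    refine ⟨hx, lt_of_le_of_lt ?_ hxneg⟩
    unfold sigOn sig
    refine Finset.sum_le_sum fun μ hμ => ?_
    by_cases hF' : μ ∈ faceOf S v
    · rw [if_pos hF']
    · rw [if_neg hF']
      exact (mul_pos (hcpos μ hμ hF') (prod_rpow_pos hx μ)).le
  have hA_scal : ∀ x ∈ negSet S c, ∀ t, 1 ≤ t → scal v t x ∈ negSet S c := by
    rintro x ⟨hx, hxneg⟩ t ht
    have ht0 : (0:ℝ) < t := lt_of_lt_of_le one_pos ht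
    refine ⟨scal_mem_orth ht0 hx, ?_⟩
    rw [sig_scal ht0 hx]
    have hstep : ∑ μ ∈ S, c μ * (∏ i, x i ^ μ i) * t ^ L μ
        ≤ ∑ μ ∈ S, c μ * (∏ i, x i ^ μ i) * t ^ a := by
      refine Finset.sum_le_sum fun μ hμ => ?_
      by_cases hF' : μ ∈ faceOf S v
      · rw [(hface μ hμ).mp hF']
      · exact mul_le_mul_of_nonneg_left
          (Real.rpow_le_rpow_of_exponent_le ht (ha_le μ hμ))
          (mul_pos (hcpos μ hμ hF') (prod_rpow_pos hx μ)).le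
    have hfin : ∑ μ ∈ S, c μ * (∏ i, x i ^ μ i) * t ^ a = sig S c x * t ^ a := by
      simp only [sig]
      rw [Finset.sum_mul]
    calc ∑ μ ∈ S, c μ * (∏ i, x i ^ μ i) * t ^ L μ
        ≤ ∑ μ ∈ S, c μ * (∏ i, x i ^ μ i) * t ^ a := hstep
      _ = sig S c x * t ^ a := hfin
      _ < 0 := mul_neg_of_neg_of_pos hxneg (Real.rpow_pos_of_pos ht0 a)
  have hB_eq : ∀ (x : Fin n → ℝ), (∀ i, 0 < x i) → ∀ t : ℝ, 0 < t →
      sigOn S c (faceOf S v) (scal v t x) = t ^ a * sigOn S c (faceOf S v) x := by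
    intro x hx t ht
    rw [sigOn_eq, sig_scal ht hx]
    simp only [sig]
    rw [Finset.mul_sum]
    refine Finset.sum_congr rfl fun μ hμ => ?_
    by_cases hF' : μ ∈ faceOf S v
    · rw [(show (∑ i, v i * μ i) = a from (hface μ hμ).mp hF')]; ring
    · rw [if_neg hF']; ring
  have hB_scal : ∀ x ∈ negSetOn S c (faceOf S v), ∀ t, 1 ≤ t →
      scal v t x ∈ negSetOn S c (faceOf S v) := by
    rintro x ⟨hx, hxneg⟩ t ht
    have ht0 : (0:ℝ) < t := lt_of_lt_of_le one_pos ht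
    exact ⟨scal_mem_orth ht0 hx,
      by rw [hB_eq x hx t ht0]
         exact mul_neg_of_pos_of_neg (Real.rpow_pos_of_pos ht0 a) hxneg⟩
  -- the key compactness estimate
  have hKey : ∀ K : Set (Fin n → ℝ), IsCompact K → K.Nonempty →
      K ⊆ negSetOn S c (faceOf S v) →
      ∃ t, 1 ≤ t ∧ ∀ x ∈ K, scal v t x ∈ negSet S c := by
    intro K hK hKne hKB
    have hKOrth : K ⊆ Orth n := fun x hx => (hKB hx).1
    set T : Finset (Fin n → ℝ) := S.filter (fun μ => μ ∉ faceOf S v) with hT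
    have hsplitOn : ∀ y : Fin n → ℝ, sigOn S c (faceOf S v) y
        = ∑ μ ∈ S.filter (fun μ => μ ∈ faceOf S v), c μ * ∏ i, y i ^ μ i := by
      intro y
      unfold sigOn
      rw [Finset.sum_filter]
    rcases T.eq_empty_or_nonempty with hTe | hTne
    · refine ⟨1, le_refl 1, fun x hx => ?_⟩
      have hxB := hKB hx
      have hall : ∀ μ ∈ S, μ ∈ faceOf S v := by
        intro μ hμ
        by_contra hμn
        have : μ ∈ T := Finset.mem_filter.mpr ⟨hμ, hμn⟩
        rw [hTe] at this
        exact absurd this (Finset.notMem_empty μ)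
      have hEq : sig S c x = sigOn S c (faceOf S v) x := by
        unfold sig sigOn
        exact Finset.sum_congr rfl fun μ hμ => by rw [if_pos (hall μ hμ)]
      rw [scal_one]
      exact ⟨hxB.1, by rw [hEq]; exact hxB.2⟩
    · obtain ⟨μ₁, hμ₁T, hμ₁⟩ := T.exists_mem_eq_sup' hTne L
      have hμ₁S : μ₁ ∈ S := (Finset.mem_filter.mp hμ₁T).1
      have hμ₁nF : μ₁ ∉ faceOf S v := (Finset.mem_filter.mp hμ₁T).2
      set b : ℝ := T.sup' hTne L with hbdef
      have hb : b < a := by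
        rw [hμ₁]
        exact lt_of_le_of_ne (ha_le μ₁ hμ₁S) fun h => hμ₁nF ((hface μ₁ hμ₁S).mpr h)
      set ε : ℝ := a - b with hε
      have hε0 : 0 < ε := sub_pos.mpr hb
      have haε : a - ε = b := by rw [hε]; ring
      have hcOn : ContinuousOn (sigOn S c (faceOf S v)) K := by
        rw [sigOn_eq]; exact (contOn_sig S _).mono hKOrth
      obtain ⟨z, hzK, hz⟩ := hK.exists_isMaxOn hKne hcOn
      set δ : ℝ := -(sigOn S c (faceOf S v) z) with hδ
      have hδ0 : 0 < δ := neg_pos.mpr (hKB hzK).2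
      have hzbound : ∀ x ∈ K, sigOn S c (faceOf S v) x ≤ -δ := by
        intro x hx
        have h := hz hx
        simp only [hδ, neg_neg]
        exact h
      have hcOnM : ContinuousOn (sig T c) K := (contOn_sig T c).mono hKOrth
      obtain ⟨w, hwK, hw⟩ := hK.exists_isMaxOn hKne hcOnM
      set C : ℝ := sig T c w with hC
      have hMle : ∀ x ∈ K, sig T c x ≤ C := fun x hx => hw hx
      have htend : Filter.Tendsto (fun t : ℝ => t ^ (-ε) * C) Filter.atTop (nhds 0) := by
        have h := (tendsto_rpow_neg_atTop hε0).mul_const C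
        simpa using h
      have hev : ∀ᶠ t in Filter.atTop, t ^ (-ε) * C < δ :=
        htend.eventually_lt_const hδ0
      obtain ⟨t, htlt, ht1⟩ := (hev.and (Filter.eventually_ge_atTop 1)).exists
      have ht0 : (0:ℝ) < t := lt_of_lt_of_le one_pos ht1
      refine ⟨t, ht1, fun x hx => ?_⟩
      have hxOrth := hKOrth hx
      refine ⟨scal_mem_orth ht0 hxOrth, ?_⟩
      rw [sig_scal ht0 hxOrth]
      have hsum : ∑ μ ∈ S, c μ * (∏ i, x i ^ μ i) * t ^ L μ
          = (∑ μ ∈ S.filter (fun μ => μ ∈ faceOf S v), c μ * (∏ i, x i ^ μ i) * t ^ L μ)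
            + ∑ μ ∈ T, c μ * (∏ i, x i ^ μ i) * t ^ L μ :=
        (Finset.sum_filter_add_sum_filter_not S _ _).symm
      have h1 : ∑ μ ∈ S.filter (fun μ => μ ∈ faceOf S v), c μ * (∏ i, x i ^ μ i) * t ^ L μ
          = t ^ a * sigOn S c (faceOf S v) x := by
        rw [hsplitOn x, Finset.mul_sum]
        refine Finset.sum_congr rfl fun μ hμ => ?_
        obtain ⟨hμS, hμF⟩ := Finset.mem_filter.mp hμ
        rw [(hface μ hμS).mp hμF]; ring
      have h2 : ∑ μ ∈ T, c μ * (∏ i, x i ^ μ i) * t ^ L μ ≤ t ^ (a - ε) * sig T c x := by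
        simp only [sig]
        rw [Finset.mul_sum]
        refine Finset.sum_le_sum fun μ hμ => ?_
        obtain ⟨hμS, hμnF⟩ := Finset.mem_filter.mp hμ
        have hLμ : L μ ≤ a - ε := by
          rw [haε]; exact Finset.le_sup' L hμ
        calc c μ * (∏ i, x i ^ μ i) * t ^ L μ
            ≤ c μ * (∏ i, x i ^ μ i) * t ^ (a - ε) :=
              mul_le_mul_of_nonneg_left
                (Real.rpow_le_rpow_of_exponent_le ht1 hLμ)
                (mul_pos (hcpos μ hμS hμnF) (prod_rpow_pos hxOrth μ)).le
          _ = t ^ (a - ε) * (c μ * ∏ i, x i ^ μ i) := by ring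
      have h3 : t ^ (a - ε) * sig T c x ≤ t ^ (a - ε) * C :=
        mul_le_mul_of_nonneg_left (hMle x hx) (Real.rpow_pos_of_pos ht0 _).le
      have hA' : t ^ a * sigOn S c (faceOf S v) x ≤ t ^ a * (-δ) :=
        mul_le_mul_of_nonneg_left (hzbound x hx) (Real.rpow_pos_of_pos ht0 a).le
      have hfinal : t ^ a * (-δ) + t ^ (a - ε) * C < 0 := by
        rw [sub_eq_add_neg, Real.rpow_add ht0]
        have hfac : t ^ (-ε) * C - δ < 0 := by linarith
        have h := mul_neg_of_pos_of_neg (Real.rpow_pos_of_pos ht0 a) hfac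
        calc t ^ a * (-δ) + t ^ a * t ^ (-ε) * C
            = t ^ a * (t ^ (-ε) * C - δ) := by ring
          _ < 0 := h
      rw [hsum, h1]
      linarith
  -- the bijection between components
  have hBopen : IsOpen (negSetOn S c (faceOf S v)) := isOpen_negSetOn S c (faceOf S v)
  have hccA : ∀ x ∈ negSet S c, ∀ t : ℝ, 1 ≤ t →
      connectedComponentIn (negSet S c) x = connectedComponentIn (negSet S c) (scal v t x) :=
    fun x hx t ht => cc_scal v x ht (fun s hs => hA_scal x hx s hs.1)
  have hccB : ∀ x ∈ negSetOn S c (faceOf S v), ∀ t : ℝ, 1 ≤ t →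
      connectedComponentIn (negSetOn S c (faceOf S v)) x
        = connectedComponentIn (negSetOn S c (faceOf S v)) (scal v t x) :=
    fun x hx t ht => cc_scal v x ht (fun s hs => hB_scal x hx s hs.1)
  refine Cardinal.mk_congr (Equiv.ofBijective
    (fun U => ⟨connectedComponentIn (negSetOn S c (faceOf S v)) U.2.1.choose,
      isConnComp_iff.mpr ⟨U.2.1.choose, hsub (U.2.2.1 U.2.1.choose_spec), rfl⟩⟩)
    ⟨?_, ?_⟩)
  · -- injectivity
    intro U₁ U₂ hΦ
    have hWeq : connectedComponentIn (negSetOn S c (faceOf S v)) U₁.2.1.choose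
        = connectedComponentIn (negSetOn S c (faceOf S v)) U₂.2.1.choose :=
      congrArg Subtype.val hΦ
    set x₁ := U₁.2.1.choose with hx₁def
    set x₂ := U₂.2.1.choose with hx₂def
    have hx₁U : x₁ ∈ U₁.1 := U₁.2.1.choose_spec
    have hx₂U : x₂ ∈ U₂.1 := U₂.2.1.choose_spec
    have hx₁A : x₁ ∈ negSet S c := U₁.2.2.1 hx₁U
    have hx₂A : x₂ ∈ negSet S c := U₂.2.2.1 hx₂U
    have hx₁B : x₁ ∈ negSetOn S c (faceOf S v) := hsub hx₁A
    have hx₂B : x₂ ∈ negSetOn S c (faceOf S v) := hsub hx₂A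
    have hWopen : IsOpen (connectedComponentIn (negSetOn S c (faceOf S v)) x₁) :=
      hBopen.connectedComponentIn
    have hWconn : IsConnected (connectedComponentIn (negSetOn S c (faceOf S v)) x₁) :=
      isConnected_connectedComponentIn_iff.mpr hx₁B
    have hWpath : IsPathConnected (connectedComponentIn (negSetOn S c (faceOf S v)) x₁) :=
      (hWopen.isConnected_iff_isPathConnected).mp hWconn
    have hx₂W : x₂ ∈ connectedComponentIn (negSetOn S c (faceOf S v)) x₁ := by
      rw [hWeq]; exact mem_connectedComponentIn hx₂B
    have hj : JoinedIn (connectedComponentIn (negSetOn S c (faceOf S v)) x₁) x₁ x₂ :=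
      hWpath.joinedIn x₁ (mem_connectedComponentIn hx₁B) x₂ hx₂W
    set γ := hj.somePath with hγdef
    set K := Set.range (γ : unitInterval → (Fin n → ℝ)) with hKdef
    have hKcomp : IsCompact K := isCompact_range γ.continuous
    have hKne : K.Nonempty := ⟨γ 0, ⟨0, rfl⟩⟩
    have hKB : K ⊆ negSetOn S c (faceOf S v) := by
      rintro _ ⟨u, rfl⟩
      exact connectedComponentIn_subset _ _ (hj.somePath_mem u)
    obtain ⟨t, ht1, htA⟩ := hKey K hKcomp hKne hKB
    have hpre : IsPreconnected (scal v t '' K) :=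
      (isPreconnected_range γ.continuous).image _ (cont_scal_x v t).continuousOn
    have himg : scal v t '' K ⊆ negSet S c := by
      rintro _ ⟨y, hy, rfl⟩; exact htA y hy
    have h12 : connectedComponentIn (negSet S c) (scal v t x₁)
        = connectedComponentIn (negSet S c) (scal v t x₂) := by
      refine eq_cc_of_preconn hpre himg ?_ ?_
      · exact ⟨x₁, ⟨0, γ.source⟩, rfl⟩
      · exact ⟨x₂, ⟨1, γ.target⟩, rfl⟩
    have hx12 : connectedComponentIn (negSet S c) x₁ = connectedComponentIn (negSet S c) x₂ :=
      (hccA x₁ hx₁A t ht1).trans (h12.trans (hccA x₂ hx₂A t ht1).symm)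
    exact Subtype.ext ((U₁.2.eq_cc hx₁U).trans (hx12.trans (U₂.2.eq_cc hx₂U).symm))
  · -- surjectivity
    rintro ⟨W, hW⟩
    have hxW : hW.1.choose ∈ W := hW.1.choose_spec
    set x := hW.1.choose with hxdef
    have hxB : x ∈ negSetOn S c (faceOf S v) := hW.2.1 hxW
    obtain ⟨t, ht1, htA⟩ := hKey {x} isCompact_singleton ⟨x, rfl⟩ (by
      intro y hy
      rw [Set.mem_singleton_iff] at hy
      rw [hy]
      exact hxB)
    have hyA : scal v t x ∈ negSet S c := htA x rfl
    have hU : IsConnComp (negSet S c) (connectedComponentIn (negSet S c) (scal v t x)) :=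
      isConnComp_iff.mpr ⟨scal v t x, hyA, rfl⟩
    refine ⟨⟨connectedComponentIn (negSet S c) (scal v t x), hU⟩, ?_⟩
    apply Subtype.ext
    show connectedComponentIn (negSetOn S c (faceOf S v)) hU.1.choose = W
    have hpU : hU.1.choose ∈ connectedComponentIn (negSet S c) (scal v t x) :=
      hU.1.choose_spec
    have hccsub : connectedComponentIn (negSet S c) (scal v t x)
        ⊆ negSetOn S c (faceOf S v) :=
      (connectedComponentIn_subset _ _).trans hsub
    have e1 : connectedComponentIn (negSetOn S c (faceOf S v)) hU.1.choose
        = connectedComponentIn (negSetOn S c (faceOf S v)) (scal v t x) :=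
      eq_cc_of_preconn isPreconnected_connectedComponentIn hccsub hpU
        (mem_connectedComponentIn hyA)
    have e2 : connectedComponentIn (negSetOn S c (faceOf S v)) (scal v t x)
        = connectedComponentIn (negSetOn S c (faceOf S v)) x :=
      (hccB x hxB t ht1).symm
    rw [e1, e2]
    exact (hW.eq_cc hxW).symm
end
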